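/- arXiv:1504.00391 — 2 statements merged into one kernel-verified Lean document; each statement's English description precedes it below -/
import Mathlib

section
/- Let C be a permutation-invariant partition of the player set of a finite normal-form game with identical interests, and let q^c : [0,∞) → Δ^n be a solution of the joint CT-ECFP differential inclusion q̇ ∈ BR(q̄) − q. Then the function v(t) = (1/n) ∑_{i=1}^n U(q^c_i(t), q̄^c_{-i}(t)) is nondecreasing in t, where q̄^c(t) is the centroid distribution of q^c(t). -/
open MeasureTheory Filter Topology

noncomputable section

namespace ECFPPrim

open Set


/-- `F` is a primitive of `f` on `[0,∞)`. -/
structure IsPrim (F f : ℝ → ℝ) : Prop where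
  cont : ContinuousOn F (Set.Ici 0)
  loc : LocallyIntegrableOn f (Set.Ici 0) volume
  eq : ∀ s t : ℝ, 0 ≤ s → s ≤ t → F t - F s = ∫ r in Set.Ioc s t, f r

theorem locInt_Ioc {E : Type*} [NormedAddCommGroup E] {f : ℝ → E}
    (h : LocallyIntegrableOn f (Set.Ici 0) volume) {s t : ℝ} (hs : 0 ≤ s) :
    IntegrableOn f (Set.Ioc s t) volume :=
  (h.integrableOn_compact_subset (fun x hx => hs.trans hx.1 : Icc s t ⊆ Ici 0)
    isCompact_Icc).mono_set Set.Ioc_subset_Icc_self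

theorem IsPrim.integrableOn {F f : ℝ → ℝ} (h : IsPrim F f) {s t : ℝ} (hs : 0 ≤ s) :
    IntegrableOn f (Set.Ioc s t) volume :=
  locInt_Ioc h.loc hs

/-- Construct `IsPrim` from the integral identity (continuity is automatic). -/
theorem isPrim_of_eq {F f : ℝ → ℝ} (hf : LocallyIntegrableOn f (Set.Ici 0) volume)
    (heq : ∀ s t : ℝ, 0 ≤ s → s ≤ t → F t - F s = ∫ r in Set.Ioc s t, f r) :
    IsPrim F f := by
  refine ⟨?_, hf, heq⟩
  intro t0 ht0
  have ht0' : (t0 : ℝ) ∈ Icc (0:ℝ) (t0 + 1) := ⟨ht0, by linarith⟩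
  have hint : IntegrableOn f (Icc (0:ℝ) (t0 + 1)) volume :=
    hf.integrableOn_compact_subset (fun x hx => hx.1) isCompact_Icc
  have hcont : ContinuousOn (fun x => F 0 + ∫ r in Set.Ioc (0:ℝ) x, f r)
      (Icc (0:ℝ) (t0 + 1)) :=
    continuousOn_const.add (intervalIntegral.continuousOn_primitive hint)
  have hEq : Set.EqOn F (fun x => F 0 + ∫ r in Set.Ioc (0:ℝ) x, f r) (Icc (0:ℝ) (t0+1)) := by
    intro x hx
    have := heq 0 x le_rfl hx.1
    simp only
    linarith
  have hconF : ContinuousOn F (Icc (0:ℝ) (t0 + 1)) := hcont.congr hEq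
  have hmem : Icc (0:ℝ) (t0 + 1) ∈ 𝓝[Set.Ici (0:ℝ)] t0 := by
    have h1 : Iio (t0 + 1) ∈ 𝓝 t0 := Iio_mem_nhds (by linarith)
    refine Filter.mem_of_superset
      (Filter.inter_mem (mem_nhdsWithin_of_mem_nhds h1) self_mem_nhdsWithin) ?_
    rintro x ⟨hx1, hx2⟩
    exact ⟨hx2, le_of_lt hx1⟩
  exact (hconF t0 ht0').mono_of_mem_nhdsWithin hmem

theorem IsPrim.const (c : ℝ) : IsPrim (fun _ => c) (fun _ => 0) := by
  refine isPrim_of_eq ?_ ?_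
  · exact (MeasureTheory.locallyIntegrable_const 0).locallyIntegrableOn _
  · intro s t _ _; simp

theorem IsPrim.add {F f G g : ℝ → ℝ} (hF : IsPrim F f) (hG : IsPrim G g) :
    IsPrim (fun t => F t + G t) (fun t => f t + g t) := by
  refine isPrim_of_eq (hF.loc.add hG.loc) ?_
  intro s t hs hst
  rw [MeasureTheory.integral_add (hF.integrableOn hs) (hG.integrableOn hs)]
  have h1 := hF.eq s t hs hst
  have h2 := hG.eq s t hs hst
  linarith

theorem IsPrim.const_mul {F f : ℝ → ℝ} (c : ℝ) (hF : IsPrim F f) :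
    IsPrim (fun t => c * F t) (fun t => c * f t) := by
  refine isPrim_of_eq ?_ ?_
  · intro x hx
    obtain ⟨v, hv, hvi⟩ := hF.loc x hx
    exact ⟨v, hv, hvi.const_mul c⟩
  · intro s t hs hst
    rw [MeasureTheory.integral_const_mul, ← hF.eq s t hs hst]
    ring

theorem IsPrim.sum {β : Type*} {s : Finset β} {F f : β → ℝ → ℝ}
    (h : ∀ i ∈ s, IsPrim (F i) (f i)) :
    IsPrim (fun t => ∑ i ∈ s, F i t) (fun t => ∑ i ∈ s, f i t) := by
  classical
  induction s using Finset.induction_on with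
  | empty => simpa using IsPrim.const 0
  | insert a s' ha ih =>
    simp only [Finset.sum_insert ha]
    exact (h a (Finset.mem_insert_self a s')).add
      (ih (fun i hi => h i (Finset.mem_insert_of_mem hi)))


/-- Fubini-based product identity for integrals over `Ioc s t`. -/
theorem integral_mul_integral_eq {f g : ℝ → ℝ} {s t : ℝ}
    (hf : IntegrableOn f (Set.Ioc s t) volume) (hg : IntegrableOn g (Set.Ioc s t) volume) :
    (∫ u in Set.Ioc s t, f u) * (∫ v in Set.Ioc s t, g v)
      = (∫ u in Set.Ioc s t, f u * ∫ v in Set.Ioc s u, g v)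
        + (∫ v in Set.Ioc s t, g v * ∫ u in Set.Ioc s v, f u) := by
  set μ := volume.restrict (Set.Ioc s t) with hμ
  have hK : Integrable (fun z : ℝ × ℝ => f z.1 * g z.2) (μ.prod μ) := hf.mul_prod hg
  set H : ℝ × ℝ → ℝ := fun z => if z.1 < z.2 then f z.1 * g z.2 else 0 with hH
  set H' : ℝ × ℝ → ℝ := fun z => if z.2 < z.1 then f z.1 * g z.2 else 0 with hH'
  set Hd : ℝ × ℝ → ℝ := fun z => if z.1 = z.2 then f z.1 * g z.2 else 0 with hHd
  have hHind : H = Set.indicator {z : ℝ × ℝ | z.1 < z.2} (fun z => f z.1 * g z.2) := by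
    funext z; simp [hH, Set.indicator_apply]
  have hH'ind : H' = Set.indicator {z : ℝ × ℝ | z.2 < z.1} (fun z => f z.1 * g z.2) := by
    funext z; simp [hH', Set.indicator_apply]
  have hHdind : Hd = Set.indicator {z : ℝ × ℝ | z.1 = z.2} (fun z => f z.1 * g z.2) := by
    funext z; simp [hHd, Set.indicator_apply]
  have hmlt : MeasurableSet {z : ℝ × ℝ | z.1 < z.2} := measurableSet_lt measurable_fst measurable_snd
  have hmgt : MeasurableSet {z : ℝ × ℝ | z.2 < z.1} := measurableSet_lt measurable_snd measurable_fst
  have hmeq : MeasurableSet {z : ℝ × ℝ | z.1 = z.2} := measurableSet_eq_fun measurable_fst measurable_snd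
  have hHint : Integrable H (μ.prod μ) := by rw [hHind]; exact hK.indicator hmlt
  have hH'int : Integrable H' (μ.prod μ) := by rw [hH'ind]; exact hK.indicator hmgt
  have hHdint : Integrable Hd (μ.prod μ) := by rw [hHdind]; exact hK.indicator hmeq
  have hsplit : ∀ z : ℝ × ℝ, f z.1 * g z.2 = H z + H' z + Hd z := by
    intro z
    rcases lt_trichotomy z.1 z.2 with h | h | h <;>
      simp [hH, hH', hHd, h, ne_of_gt, ne_of_lt, not_lt_of_gt]
  -- total integral
  have htot : ∫ z, f z.1 * g z.2 ∂(μ.prod μ)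
      = (∫ u in Set.Ioc s t, f u) * ∫ v in Set.Ioc s t, g v :=
    MeasureTheory.integral_prod_mul f g
  -- diagonal part vanishes
  have hdiag : ∫ z, Hd z ∂(μ.prod μ) = 0 := by
    rw [MeasureTheory.integral_prod _ hHdint]
    have hinner : ∀ u : ℝ, (∫ v, Hd (u, v) ∂μ) = 0 := by
      intro u
      have hnull : μ {u} = 0 := by
        have := measure_mono_null (Set.inter_subset_left : {u} ∩ Set.Ioc s t ⊆ {u})
          (measure_singleton u (μ := volume))
        simpa [hμ, Measure.restrict_apply (measurableSet_singleton u)] using this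
      have hae : (fun v => Hd (u, v)) =ᵐ[μ] 0 := by
        rw [Filter.EventuallyEq, MeasureTheory.ae_iff]
        refine measure_mono_null ?_ hnull
        intro v hv
        simp only [Set.mem_setOf_eq, Pi.zero_apply, hHd] at hv
        rw [Set.mem_singleton_iff]
        by_contra hne
        exact hv (if_neg (fun h => hne h.symm))
      rw [MeasureTheory.integral_congr_ae hae]
      simp
    simp [hinner]
  -- upper-triangle part
  have htri : ∫ z, H z ∂(μ.prod μ) = ∫ v in Set.Ioc s t, g v * ∫ u in Set.Ioc s v, f u := by
    rw [MeasureTheory.integral_prod_symm _ hHint]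
    refine MeasureTheory.setIntegral_congr_fun measurableSet_Ioc ?_
    intro v hv
    show (∫ u, H (u, v) ∂μ) = g v * ∫ u in Set.Ioc s v, f u
    have hrw : (fun u => H (u, v)) = fun u => Set.indicator (Set.Iio v) (fun u => f u * g v) u := by
      funext u; simp [hH, Set.indicator_apply, Set.mem_Iio]
    rw [hrw, hμ, MeasureTheory.setIntegral_indicator measurableSet_Iio]
    have hset : Set.Ioc s t ∩ Set.Iio v = Set.Ioo s v := by
      ext u; constructor
      · rintro ⟨⟨h1, h2⟩, h3⟩; exact ⟨h1, h3⟩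
      · rintro ⟨h1, h2⟩; exact ⟨⟨h1, le_trans (le_of_lt h2) hv.2⟩, h2⟩
    rw [hset, ← MeasureTheory.integral_Ioc_eq_integral_Ioo, MeasureTheory.integral_mul_const,
      mul_comm]
  -- lower-triangle part
  have htri' : ∫ z, H' z ∂(μ.prod μ) = ∫ u in Set.Ioc s t, f u * ∫ v in Set.Ioc s u, g v := by
    rw [MeasureTheory.integral_prod _ hH'int]
    refine MeasureTheory.setIntegral_congr_fun measurableSet_Ioc ?_
    intro u hu
    show (∫ v, H' (u, v) ∂μ) = f u * ∫ v in Set.Ioc s u, g v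
    have hrw : (fun v => H' (u, v)) = fun v => Set.indicator (Set.Iio u) (fun v => f u * g v) v := by
      funext v; simp [hH', Set.indicator_apply, Set.mem_Iio]
    rw [hrw, hμ, MeasureTheory.setIntegral_indicator measurableSet_Iio]
    have hset : Set.Ioc s t ∩ Set.Iio u = Set.Ioo s u := by
      ext v; constructor
      · rintro ⟨⟨h1, h2⟩, h3⟩; exact ⟨h1, h3⟩
      · rintro ⟨h1, h2⟩; exact ⟨⟨h1, le_trans (le_of_lt h2) hu.2⟩, h2⟩
    rw [hset, ← MeasureTheory.integral_Ioc_eq_integral_Ioo, MeasureTheory.integral_const_mul]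
  have hfin := MeasureTheory.integral_congr_ae (Filter.Eventually.of_forall
    (fun z => hsplit z) : (fun z : ℝ × ℝ => f z.1 * g z.2) =ᵐ[μ.prod μ]
      fun z => H z + H' z + Hd z)
  rw [htot] at hfin
  have a1 : (∫ z : ℝ × ℝ, (H z + H' z + Hd z) ∂(μ.prod μ))
      = (∫ z : ℝ × ℝ, (H z + H' z) ∂(μ.prod μ)) + ∫ z : ℝ × ℝ, Hd z ∂(μ.prod μ) :=
    MeasureTheory.integral_add (f := fun z => H z + H' z) (g := Hd)
      (hHint.add hH'int) hHdint
  have a2 : (∫ z : ℝ × ℝ, (H z + H' z) ∂(μ.prod μ))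
      = (∫ z : ℝ × ℝ, H z ∂(μ.prod μ)) + ∫ z : ℝ × ℝ, H' z ∂(μ.prod μ) :=
    MeasureTheory.integral_add hHint hH'int
  rw [hfin, a1, a2, hdiag, htri, htri']
  ring

theorem IsPrim.bdd_mul_integrable {F f G g : ℝ → ℝ} (hF : IsPrim F f) (hG : IsPrim G g)
    {s t : ℝ} (hs : 0 ≤ s) :
    IntegrableOn (fun r => f r * G r) (Set.Ioc s t) volume := by
  have hfi : IntegrableOn f (Set.Ioc s t) volume := hF.integrableOn hs
  have hGc : ContinuousOn G (Set.Icc s t) :=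
    hG.cont.mono (fun x hx => hs.trans hx.1)
  obtain ⟨C, hC⟩ := isCompact_Icc.exists_bound_of_continuousOn hGc
  have hsubI : Set.Ioc s t ⊆ Set.Ici (0:ℝ) := fun x hx => hs.trans (le_of_lt hx.1)
  have hGm : AEStronglyMeasurable G (volume.restrict (Set.Ioc s t)) :=
    (hG.cont.mono hsubI).aestronglyMeasurable measurableSet_Ioc
  have hbdd : ∀ᵐ r ∂(volume.restrict (Set.Ioc s t)), ‖G r‖ ≤ C := by
    refine (MeasureTheory.ae_restrict_iff' measurableSet_Ioc).2 ?_
    exact Filter.Eventually.of_forall fun r hr => hC r (Set.Ioc_subset_Icc_self hr)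
  have := MeasureTheory.Integrable.bdd_mul hfi hGm hbdd
  exact this.congr (Filter.Eventually.of_forall fun r => mul_comm (G r) (f r))

theorem IsPrim.mul {F f G g : ℝ → ℝ} (hF : IsPrim F f) (hG : IsPrim G g) :
    IsPrim (fun t => F t * G t) (fun t => f t * G t + F t * g t) := by
  have hloc : LocallyIntegrableOn (fun r => f r * G r + F r * g r) (Set.Ici 0) volume := by
    rw [MeasureTheory.locallyIntegrableOn_iff isClosed_Ici.isLocallyClosed]
    intro k hk hkc
    rcases Set.eq_empty_or_nonempty k with rfl | hkne
    · simp [IntegrableOn]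
    obtain ⟨b, hb⟩ := hkc.bddAbove
    have hsub2 : k ⊆ Set.Ioc (0:ℝ) b ∪ {0} := by
      intro r hr
      rcases eq_or_lt_of_le (show (0:ℝ) ≤ r from hk hr) with h | h
      · exact Or.inr (by simp [← h])
      · exact Or.inl ⟨h, hb hr⟩
    refine MeasureTheory.IntegrableOn.mono_set ?_ hsub2
    have hFg : IntegrableOn (fun r => F r * g r) (Set.Ioc (0:ℝ) b) volume :=
      (hG.bdd_mul_integrable hF le_rfl).congr
        (Filter.Eventually.of_forall fun r => mul_comm (g r) (F r))
    refine MeasureTheory.IntegrableOn.union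
      ((hF.bdd_mul_integrable hG le_rfl).add hFg) ?_
    rw [IntegrableOn, Measure.restrict_singleton]
    simp [MeasureTheory.integrable_zero_measure]
  refine isPrim_of_eq hloc ?_
  intro s t hs hst
  have h1 := hF.eq s t hs hst
  have h2 := hG.eq s t hs hst
  have hfi : IntegrableOn f (Set.Ioc s t) volume := hF.integrableOn hs
  have hgi : IntegrableOn g (Set.Ioc s t) volume := hG.integrableOn hs
  have hcore := integral_mul_integral_eq hfi hgi
  have hfG : IntegrableOn (fun r => f r * G r) (Set.Ioc s t) volume :=
    hF.bdd_mul_integrable hG hs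
  have hgF : IntegrableOn (fun r => g r * F r) (Set.Ioc s t) volume :=
    hG.bdd_mul_integrable hF hs
  have e1 : (∫ r in Set.Ioc s t, f r * ∫ v in Set.Ioc s r, g v)
      = ∫ r in Set.Ioc s t, (f r * G r - f r * G s) := by
    refine MeasureTheory.setIntegral_congr_fun measurableSet_Ioc ?_
    intro r hr
    show f r * ∫ v in Set.Ioc s r, g v = f r * G r - f r * G s
    rw [← hG.eq s r hs (le_of_lt hr.1)]
    ring
  have e2 : (∫ r in Set.Ioc s t, g r * ∫ v in Set.Ioc s r, f v)
      = ∫ r in Set.Ioc s t, (g r * F r - g r * F s) := by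
    refine MeasureTheory.setIntegral_congr_fun measurableSet_Ioc ?_
    intro r hr
    show g r * ∫ v in Set.Ioc s r, f v = g r * F r - g r * F s
    rw [← hF.eq s r hs (le_of_lt hr.1)]
    ring
  have e1' : (∫ r in Set.Ioc s t, (f r * G r - f r * G s))
      = (∫ r in Set.Ioc s t, f r * G r) - G s * ∫ r in Set.Ioc s t, f r := by
    rw [MeasureTheory.integral_sub hfG (hfi.mul_const (G s))]
    rw [MeasureTheory.integral_mul_const, mul_comm]
  have e2' : (∫ r in Set.Ioc s t, (g r * F r - g r * F s))
      = (∫ r in Set.Ioc s t, g r * F r) - F s * ∫ r in Set.Ioc s t, g r := by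
    rw [MeasureTheory.integral_sub hgF (hgi.mul_const (F s))]
    rw [MeasureTheory.integral_mul_const, mul_comm]
  rw [e1, e1', e2, e2'] at hcore
  have hFg : IntegrableOn (fun r => F r * g r) (Set.Ioc s t) volume :=
    hgF.congr (Filter.Eventually.of_forall fun r => mul_comm (g r) (F r))
  have hrhs : (∫ r in Set.Ioc s t, (f r * G r + F r * g r))
      = (∫ r in Set.Ioc s t, f r * G r) + ∫ r in Set.Ioc s t, g r * F r := by
    rw [MeasureTheory.integral_add hfG hFg]
    congr 1
    exact MeasureTheory.integral_congr_ae
      (Filter.Eventually.of_forall fun r => mul_comm (F r) (g r))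
  rw [hrhs]
  linear_combination hcore + (G s + (∫ r in Set.Ioc s t, g r)) * h1 + F t * h2

theorem IsPrim.prod {β : Type*} [DecidableEq β] {S : Finset β} {F f : β → ℝ → ℝ}
    (h : ∀ i ∈ S, IsPrim (F i) (f i)) :
    IsPrim (fun t => ∏ i ∈ S, F i t)
      (fun t => ∑ i ∈ S, f i t * ∏ j ∈ S.erase i, F j t) := by
  induction S using Finset.induction_on with
  | empty => simpa using IsPrim.const 1
  | insert a S' ha ih =>
    have hA : IsPrim (F a) (f a) := h a (Finset.mem_insert_self a S')
    have hrest := ih (fun i hi => h i (Finset.mem_insert_of_mem hi))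
    have hmul := hA.mul hrest
    have hFeq : (fun t => ∏ i ∈ insert a S', F i t) = fun t => F a t * ∏ i ∈ S', F i t := by
      funext t; rw [Finset.prod_insert ha]
    have hfeq : (fun t => ∑ i ∈ insert a S', f i t * ∏ j ∈ (insert a S').erase i, F j t)
        = fun t => f a t * (∏ i ∈ S', F i t)
          + F a t * ∑ i ∈ S', f i t * ∏ j ∈ S'.erase i, F j t := by
      funext t
      rw [Finset.sum_insert ha, Finset.erase_insert ha]
      congr 1
      rw [Finset.mul_sum]
      refine Finset.sum_congr rfl ?_
      intro i hi
      have hia : i ≠ a := fun hh => ha (hh ▸ hi)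
      rw [Finset.erase_insert_of_ne hia.symm,
        Finset.prod_insert (fun hh => ha (Finset.mem_of_mem_erase hh))]
      ring
    rw [hFeq, hfeq]
    exact hmul

end ECFPPrim


namespace ECFP

variable {ι A κ : Type*}

/-- The mixed-strategy simplex over a finite action set `Y` inside the action universe `A`. -/
def simplex (Y : Finset A) : Set (A → ℝ) :=
  {p | (∀ a, 0 ≤ p a) ∧ (∀ a, a ∉ Y → p a = 0) ∧ ∑ a ∈ Y, p a = 1}

/-- The space `Δⁿ` of joint mixed strategies. -/
def Delta (Y : ι → Finset A) : Set (ι → A → ℝ) :=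
  {p | ∀ i, p i ∈ simplex (Y i)}

variable [Fintype ι] [DecidableEq ι] [Fintype A] [DecidableEq κ]

/-- The mixed extension of the common utility `u`:
`U(p₁,…,pₙ) = ∑_y u(y) p₁(y₁)⋯pₙ(yₙ)`. -/
def U (u : (ι → A) → ℝ) (p : ι → A → ℝ) : ℝ :=
  ∑ y : ι → A, u y * ∏ i, p i (y i)

/-- The `ε`-best-response set of player `i` against the joint strategy `p`
(only the components `p_{-i}` matter, since player `i`'s component is overwritten):
`{pᵢ ∈ Δᵢ : U(pᵢ,p_{-i}) ≥ U(qᵢ,p_{-i}) - ε  ∀ qᵢ ∈ Δᵢ}`. -/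
def BRi (Y : ι → Finset A) (u : (ι → A) → ℝ) (ε : ℝ) (p : ι → A → ℝ) (i : ι) :
    Set (A → ℝ) :=
  {pi | pi ∈ simplex (Y i) ∧
    ∀ qi ∈ simplex (Y i),
      U u (Function.update p i pi) ≥ U u (Function.update p i qi) - ε}

/-- The joint `ε`-best-response set `BR^ε(p) = (BR₁^ε(p_{-1}),…,BRₙ^ε(p_{-n}))`. -/
def BR (Y : ι → Finset A) (u : (ι → A) → ℝ) (ε : ℝ) (p : ι → A → ℝ) :
    Set (ι → A → ℝ) :=
  {b | ∀ i, b i ∈ BRi Y u ε p i}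

/-- The profile obtained from `y` by swapping the strategies of players `i` and `j`. -/
def swapStrat (y : ι → A) (i j : ι) : ι → A :=
  Function.update (Function.update y i (y j)) j (y i)

/-- `cls : ι → κ` encodes a permutation-invariant partition of the player set (the classes
are the fibers of `cls`): players in the same class have the same action set, and the utility
is invariant under swapping the strategies of two same-class players in any strategy profile. -/
def PermInvariant (Y : ι → Finset A) (u : (ι → A) → ℝ) (cls : ι → κ) : Prop :=
  ∀ i j : ι, cls i = cls j →
    Y i = Y j ∧ ∀ y : ι → A, (∀ k, y k ∈ Y k) → u (swapStrat y i j) = u y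

/-- The equivalence class (as a finset of players) of player `i`. -/
def cluster (cls : ι → κ) (i : ι) : Finset ι :=
  Finset.univ.filter (fun j => cls j = cls i)

/-- The centroid distribution `p̄`: player `i` is assigned the average of the strategies of
the players in `i`'s class. -/
def centroid (cls : ι → κ) (p : ι → A → ℝ) : ι → A → ℝ :=
  fun i => ((cluster cls i).card : ℝ)⁻¹ • ∑ j ∈ cluster cls i, p j

/-- A joint strategy is class-constant if same-class players use identical strategies. -/
def classConst (cls : ι → κ) (p : ι → A → ℝ) : Prop :=
  ∀ i j, cls i = cls j → p i = p j

/-- The set of Nash equilibria. -/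
def NE (Y : ι → Finset A) (u : (ι → A) → ℝ) : Set (ι → A → ℝ) :=
  {p | p ∈ Delta Y ∧ ∀ i, ∀ qi ∈ simplex (Y i),
    U u (Function.update p i qi) ≤ U u p}

/-- The set of symmetric Nash equilibria relative to the partition `cls`. -/
def SNE (Y : ι → Finset A) (u : (ι → A) → ℝ) (cls : ι → κ) : Set (ι → A → ℝ) :=
  {p | p ∈ NE Y u ∧ classConst cls p}

/-- The set of mean-centric equilibria relative to the partition `cls`:
`U(pᵢ, p̄_{-i}) ≥ U(pᵢ', p̄_{-i})` for all `pᵢ' ∈ Δᵢ` and all `i`. -/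
def MCE (Y : ι → Finset A) (u : (ι → A) → ℝ) (cls : ι → κ) : Set (ι → A → ℝ) :=
  {p | p ∈ Delta Y ∧ ∀ i, ∀ qi ∈ simplex (Y i),
    U u (Function.update (centroid cls p) i qi)
      ≤ U u (Function.update (centroid cls p) i (p i))}

/-- `V(p) = (1/n) ∑ᵢ U(pᵢ, p̄_{-i})`. -/
def Vfun (u : (ι → A) → ℝ) (cls : ι → κ) (p : ι → A → ℝ) : ℝ :=
  (Fintype.card ι : ℝ)⁻¹ * ∑ i, U u (Function.update (centroid cls p) i (p i))

/-- A discrete-time ECFP process w.r.t. `(Γ, 𝒞)`: `q(1) = a(1)`,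
`q(t+1) = q(t) + γₜ (a(t+1) − q(t))` and `a(t+1) ∈ BR^{εₜ}(q̄(t))` for all `t`
(time is indexed by `ℕ`, i.e. `t = 0` plays the role of `t = 1` in the paper). -/
structure IsECFP (Y : ι → Finset A) (u : (ι → A) → ℝ) (cls : ι → κ)
    (γ ε : ℕ → ℝ) (a q : ℕ → ι → A → ℝ) : Prop where
  a_init_mem : a 0 ∈ Delta Y
  q_mem : ∀ t, q t ∈ Delta Y
  init : q 0 = a 0
  step : ∀ t, q (t + 1) = q t + γ t • (a (t + 1) - q t)
  br : ∀ t, a (t + 1) ∈ BR Y u (ε t) (centroid cls (q t))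

/-- A solution of the differential inclusion `ẋ ∈ F(x)` taking values in `Δⁿ`:
an everywhere-`Δⁿ`-valued trajectory on `[0,∞)` which is the integral of a locally
integrable selection `g(t) ∈ F(x(t))` (a.e.). -/
def IsSolution (Y : ι → Finset A) (F : (ι → A → ℝ) → Set (ι → A → ℝ))
    (x : ℝ → ι → A → ℝ) : Prop :=
  (∀ t : ℝ, 0 ≤ t → x t ∈ Delta Y) ∧
  ∃ g : ℝ → ι → A → ℝ,
    LocallyIntegrableOn g (Set.Ici (0 : ℝ)) ∧
    (∀ᵐ t ∂(volume.restrict (Set.Ici (0 : ℝ))), g t ∈ F (x t)) ∧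
    ∀ t : ℝ, 0 ≤ t → x t = x 0 + ∫ s in Set.Ioc (0 : ℝ) t, g s

/-- Right-hand side of the joint CT-ECFP differential inclusion `q̇ ∈ BR(q̄) − q`. -/
def Fjoint (Y : ι → Finset A) (u : (ι → A) → ℝ) (cls : ι → κ)
    (q : ι → A → ℝ) : Set (ι → A → ℝ) :=
  (fun b => b - q) '' BR Y u 0 (centroid cls q)

/-- Right-hand side of the centroid CT-ECFP differential inclusion `ẏ ∈ BR(y) − y`. -/
def Fcent (Y : ι → Finset A) (u : (ι → A) → ℝ)
    (y : ι → A → ℝ) : Set (ι → A → ℝ) :=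
  (fun b => b - y) '' BR Y u 0 y

/-- The ω-limit set of a continuous-time trajectory: all limits of sequences
`x(t_k)` with `t_k → ∞`. -/
def omegaLimitSet (x : ℝ → ι → A → ℝ) : Set (ι → A → ℝ) :=
  {p | ∃ tk : ℕ → ℝ, Tendsto tk atTop atTop ∧ Tendsto (fun k => x (tk k)) atTop (𝓝 p)}

/-- The set of limit points of a (discrete-time) sequence. -/
def seqLimitPoints (q : ℕ → ι → A → ℝ) : Set (ι → A → ℝ) :=
  {p | ∃ φ : ℕ → ℕ, StrictMono φ ∧ Tendsto (fun k => q (φ k)) atTop (𝓝 p)}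

/-- A compact set `X ⊆ Δⁿ` is internally chain transitive for the inclusion `ẋ ∈ F(x)`:
any two points of `X` can be joined, for every `ε > 0` and `T > 0`, by finitely many
solution pieces of duration `> T` staying in `X`, with jumps of size `≤ ε`. -/
def InternallyChainTransitive (Y : ι → Finset A)
    (F : (ι → A → ℝ) → Set (ι → A → ℝ)) (X : Set (ι → A → ℝ)) : Prop :=
  IsCompact X ∧ X ⊆ Delta Y ∧
  ∀ ξ ∈ X, ∀ η ∈ X, ∀ ε : ℝ, 0 < ε → ∀ T : ℝ, 0 < T →
    ∃ k : ℕ, 0 < k ∧ ∃ x : ℕ → ℝ → ι → A → ℝ, ∃ tt : ℕ → ℝ,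
      (∀ i < k, IsSolution Y F (x i)) ∧
      (∀ i < k, T < tt i) ∧
      (∀ i < k, ∀ s : ℝ, 0 ≤ s → s ≤ tt i → x i s ∈ X) ∧
      (∀ i, i + 1 < k → ‖x i (tt i) - x (i + 1) 0‖ ≤ ε) ∧
      ‖x 0 0 - ξ‖ ≤ ε ∧ ‖x (k - 1) (tt (k - 1)) - η‖ ≤ ε


section Lemmas

lemma prod_update_eval (P : ι → A → ℝ) (i : ι) (σ : A → ℝ) (y : ι → A) :
    ∏ k, Function.update P i σ k (y k)
      = σ (y i) * ∏ k ∈ Finset.univ.erase i, P k (y k) := by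
  have h : ∀ k, Function.update P i σ k (y k)
      = Function.update (fun k => P k (y k)) i (σ (y i)) k := by
    intro k
    by_cases hk : k = i
    · subst hk; simp
    · simp [Function.update_of_ne hk]
  rw [Finset.prod_congr rfl (fun k _ => h k),
    Finset.prod_update_of_mem (Finset.mem_univ i), Finset.erase_eq]

lemma U_update_eq (u : (ι → A) → ℝ) (P : ι → A → ℝ) (i : ι) (σ : A → ℝ) :
    U u (Function.update P i σ)
      = ∑ y : ι → A, (u y * ∏ k ∈ Finset.univ.erase i, P k (y k)) * σ (y i) := by
  unfold U
  refine Finset.sum_congr rfl fun y _ => ?_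
  rw [prod_update_eval]
  ring

lemma U_update_sum {β : Type*} (u : (ι → A) → ℝ) (P : ι → A → ℝ) (i : ι)
    (S : Finset β) (f : β → A → ℝ) :
    U u (Function.update P i (∑ j ∈ S, f j))
      = ∑ j ∈ S, U u (Function.update P i (f j)) := by
  simp only [U_update_eq, Finset.sum_apply, Finset.mul_sum]
  exact Finset.sum_comm

lemma U_update_smul (u : (ι → A) → ℝ) (P : ι → A → ℝ) (i : ι) (c : ℝ) (σ : A → ℝ) :
    U u (Function.update P i (c • σ)) = c * U u (Function.update P i σ) := by
  simp only [U_update_eq, Pi.smul_apply, smul_eq_mul, Finset.mul_sum]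
  exact Finset.sum_congr rfl fun y _ => by ring

lemma U_update_sub (u : (ι → A) → ℝ) (P : ι → A → ℝ) (i : ι) (σ τ : A → ℝ) :
    U u (Function.update P i (σ - τ))
      = U u (Function.update P i σ) - U u (Function.update P i τ) := by
  simp only [U_update_eq, Pi.sub_apply, ← Finset.sum_sub_distrib]
  exact Finset.sum_congr rfl fun y _ => by ring

lemma mem_cluster_self (cls : ι → κ) (i : ι) : i ∈ cluster cls i := by
  simp [cluster]

lemma cls_of_mem_cluster {cls : ι → κ} {j i : ι} (h : j ∈ cluster cls i) :
    cls j = cls i := (Finset.mem_filter.1 h).2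

lemma cluster_card_pos (cls : ι → κ) (i : ι) : 0 < (cluster cls i).card :=
  Finset.card_pos.2 ⟨i, mem_cluster_self cls i⟩

lemma cluster_congr {cls : ι → κ} {i j : ι} (h : cls i = cls j) :
    cluster cls i = cluster cls j := by
  unfold cluster; rw [h]

lemma centroid_apply (cls : ι → κ) (p : ι → A → ℝ) (i : ι) (a : A) :
    centroid cls p i a = ((cluster cls i).card : ℝ)⁻¹ * ∑ j ∈ cluster cls i, p j a := by
  simp [centroid, Finset.sum_apply]

lemma centroid_classConst (cls : ι → κ) (p : ι → A → ℝ) {i j : ι} (h : cls i = cls j) :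
    centroid cls p i = centroid cls p j := by
  unfold centroid; rw [cluster_congr h]

lemma centroid_sub (cls : ι → κ) (p q : ι → A → ℝ) (i : ι) :
    centroid cls (p - q) i = centroid cls p i - centroid cls q i := by
  funext a
  simp [centroid_apply, Finset.sum_sub_distrib, mul_sub]

lemma centroid_mem_Delta {Y : ι → Finset A} {u : (ι → A) → ℝ} {cls : ι → κ}
    (hpi : PermInvariant Y u cls) {p : ι → A → ℝ} (hp : p ∈ Delta Y) :
    centroid cls p ∈ Delta Y := by
  intro i
  have hc : ((cluster cls i).card : ℝ) ≠ 0 :=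
    Nat.cast_ne_zero.2 (cluster_card_pos cls i).ne'
  refine ⟨?_, ?_, ?_⟩
  · intro a
    rw [centroid_apply]
    exact mul_nonneg (inv_nonneg.2 (Nat.cast_nonneg _))
      (Finset.sum_nonneg fun j _ => (hp j).1 a)
  · intro a ha
    rw [centroid_apply]
    have hz : ∀ j ∈ cluster cls i, p j a = 0 := by
      intro j hj
      have hY : Y j = Y i := (hpi j i (cls_of_mem_cluster hj)).1
      exact (hp j).2.1 a (by rw [hY]; exact ha)
    rw [Finset.sum_eq_zero hz, mul_zero]
  · have : ∀ j ∈ cluster cls i, ∑ a ∈ Y i, p j a = 1 := by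
      intro j hj
      have hY : Y j = Y i := (hpi j i (cls_of_mem_cluster hj)).1
      rw [← hY]
      exact (hp j).2.2
    have hs : ∑ a ∈ Y i, centroid cls p i a
        = ((cluster cls i).card : ℝ)⁻¹ * ∑ j ∈ cluster cls i, ∑ a ∈ Y i, p j a := by
      simp only [centroid_apply, ← Finset.mul_sum]
      rw [Finset.sum_comm]
    rw [hs, Finset.sum_congr rfl this, Finset.sum_const, nsmul_eq_mul, mul_one,
      inv_mul_cancel₀ hc]

lemma U_update_swap {Y : ι → Finset A} {u : (ι → A) → ℝ} {cls : ι → κ}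
    (hpi : PermInvariant Y u cls) {i j : ι} (hij : cls i = cls j)
    {P : ι → A → ℝ} (hP : P ∈ Delta Y) (hPij : P i = P j)
    {σ : A → ℝ} (hσ : σ ∈ simplex (Y i)) :
    U u (Function.update P i σ) = U u (Function.update P j σ) := by
  rcases eq_or_ne i j with rfl | hne
  · rfl
  classical
  let e : (ι → A) ≃ (ι → A) :=
    { toFun := fun z k => z (Equiv.swap i j k)
      invFun := fun z k => z (Equiv.swap i j k)
      left_inv := fun z => by funext k; simp
      right_inv := fun z => by funext k; simp }
  have hswap : ∀ z : ι → A, e z = swapStrat z i j := by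
    intro z; funext k
    show z (Equiv.swap i j k) = swapStrat z i j k
    unfold swapStrat
    rcases eq_or_ne k i with rfl | hki
    · rw [Equiv.swap_apply_left, Function.update_of_ne hne, Function.update_self]
    rcases eq_or_ne k j with rfl | hkj
    · rw [Equiv.swap_apply_right, Function.update_self]
    · rw [Equiv.swap_apply_of_ne_of_ne hki hkj, Function.update_of_ne hkj,
        Function.update_of_ne hki]
  unfold U
  refine Fintype.sum_equiv e _ _ ?_
  intro z
  have prodeq : (∏ k, Function.update P j σ k (e z k))
      = ∏ k, Function.update P i σ k (z k) := by
    refine Fintype.prod_equiv (Equiv.swap i j) _ _ ?_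
    intro k
    show Function.update P j σ k (e z k)
      = Function.update P i σ (Equiv.swap i j k) (z (Equiv.swap i j k))
    have hz : e z k = z (Equiv.swap i j k) := rfl
    rw [hz]
    rcases eq_or_ne k i with rfl | hki
    · rw [Equiv.swap_apply_left, Function.update_of_ne hne, Function.update_of_ne hne.symm,
        hPij]
    rcases eq_or_ne k j with rfl | hkj
    · rw [Equiv.swap_apply_right, Function.update_self, Function.update_self]
    · rw [Equiv.swap_apply_of_ne_of_ne hki hkj, Function.update_of_ne hkj,
        Function.update_of_ne hki]
  rw [prodeq]
  by_cases hz : (∏ k, Function.update P i σ k (z k)) = 0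
  · rw [hz, mul_zero, mul_zero]
  · have hmem : ∀ k, z k ∈ Y k := by
      intro k
      by_contra hk
      apply hz
      refine Finset.prod_eq_zero (Finset.mem_univ k) ?_
      rcases eq_or_ne k i with rfl | hki
      · rw [Function.update_self]; exact hσ.2.1 _ hk
      · rw [Function.update_of_ne hki]; exact (hP k).2.1 _ hk
    have hu : u (e z) = u z := by
      rw [hswap z]
      exact (hpi i j hij).2 z hmem
    rw [hu]

lemma U_le_update_centroid {Y : ι → Finset A} {u : (ι → A) → ℝ} {cls : ι → κ}
    (hpi : PermInvariant Y u cls) {p b : ι → A → ℝ} (hp : p ∈ Delta Y)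
    (hb : b ∈ BR Y u 0 (centroid cls p)) (i : ι) :
    U u (centroid cls p) ≤ U u (Function.update (centroid cls p) i (centroid cls b i)) := by
  set P := centroid cls p with hPdef
  have hPD : P ∈ Delta Y := centroid_mem_Delta hpi hp
  have hcpos : (0:ℝ) < ((cluster cls i).card : ℝ) := by
    exact_mod_cast cluster_card_pos cls i
  have h1 : U u (Function.update P i (centroid cls b i))
      = ((cluster cls i).card : ℝ)⁻¹
        * ∑ j ∈ cluster cls i, U u (Function.update P j (b j)) := by
    have hdef : centroid cls b i
        = ((cluster cls i).card : ℝ)⁻¹ • ∑ j ∈ cluster cls i, b j := rfl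
    rw [hdef, U_update_smul, U_update_sum]
    congr 1
    refine Finset.sum_congr rfl fun j hj => ?_
    have hcls : cls i = cls j := (cls_of_mem_cluster hj).symm
    have hσ : b j ∈ simplex (Y i) := by
      rw [(hpi i j hcls).1]
      exact (hb j).1
    exact U_update_swap hpi hcls hPD (centroid_classConst cls p hcls) hσ
  have h2 : ∀ j ∈ cluster cls i, U u P ≤ U u (Function.update P j (b j)) := by
    intro j hj
    have hbr := (hb j).2 (P j) (hPD j)
    rw [sub_zero] at hbr
    calc U u P = U u (Function.update P j (P j)) := by rw [Function.update_eq_self]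
    _ ≤ _ := hbr
  rw [h1]
  have hsum := Finset.sum_le_sum h2
  have hconst : (∑ _j ∈ cluster cls i, U u P) = ((cluster cls i).card : ℝ) * U u P := by
    rw [Finset.sum_const, nsmul_eq_mul]
  calc U u P = ((cluster cls i).card : ℝ)⁻¹ * (((cluster cls i).card : ℝ) * U u P) := by
        field_simp
    _ ≤ ((cluster cls i).card : ℝ)⁻¹
        * ∑ j ∈ cluster cls i, U u (Function.update P j (b j)) := by
        rw [← hconst]
        exact mul_le_mul_of_nonneg_left hsum (inv_nonneg.2 hcpos.le)

lemma sum_cluster_avg (cls : ι → κ) (f : ι → ℝ) :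
    ∑ i, ((cluster cls i).card : ℝ)⁻¹ * ∑ j ∈ cluster cls i, f j = ∑ j, f j := by
  have h1 : ∀ i, ∑ j ∈ cluster cls i, f j = ∑ j, if cls j = cls i then f j else 0 := by
    intro i
    rw [show cluster cls i = Finset.univ.filter (fun j => cls j = cls i) from rfl,
      Finset.sum_filter]
  simp only [h1, Finset.mul_sum]
  rw [Finset.sum_comm]
  refine Finset.sum_congr rfl fun j _ => ?_
  have h2 : ∀ i, ((cluster cls i).card : ℝ)⁻¹ * (if cls j = cls i then f j else 0)
      = if cls i = cls j then ((cluster cls j).card : ℝ)⁻¹ * f j else 0 := by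
    intro i
    by_cases h : cls j = cls i
    · rw [if_pos h, if_pos h.symm, cluster_congr h.symm]
    · rw [if_neg h, if_neg (fun hh => h hh.symm), mul_zero]
  simp only [h2]
  rw [← Finset.sum_filter,
    show Finset.univ.filter (fun i => cls i = cls j) = cluster cls j from rfl,
    Finset.sum_const, nsmul_eq_mul]
  have hc : ((cluster cls j).card : ℝ) ≠ 0 :=
    Nat.cast_ne_zero.2 (cluster_card_pos cls j).ne'
  field_simp

lemma Vfun_eq_U_centroid [Nonempty ι] {Y : ι → Finset A} {u : (ι → A) → ℝ} {cls : ι → κ}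
    (hpi : PermInvariant Y u cls) {p : ι → A → ℝ} (hp : p ∈ Delta Y) :
    Vfun u cls p = U u (centroid cls p) := by
  set P := centroid cls p with hPdef
  have hPD : P ∈ Delta Y := centroid_mem_Delta hpi hp
  have hclaim : ∀ i : ι, U u P = ((cluster cls i).card : ℝ)⁻¹
      * ∑ j ∈ cluster cls i, U u (Function.update P j (p j)) := by
    intro i
    have h0 : U u P = U u (Function.update P i (P i)) := by
      rw [Function.update_eq_self]
    have hdef : P i = ((cluster cls i).card : ℝ)⁻¹ • ∑ j ∈ cluster cls i, p j := rfl
    rw [h0, hdef, U_update_smul, U_update_sum]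
    congr 1
    refine Finset.sum_congr rfl fun j hj => ?_
    have hcls : cls i = cls j := (cls_of_mem_cluster hj).symm
    have hσ : p j ∈ simplex (Y i) := by
      rw [(hpi i j hcls).1]
      exact hp j
    exact U_update_swap hpi hcls hPD (centroid_classConst cls p hcls) hσ
  have hVs : ∑ i, U u (Function.update P i (p i)) = (Fintype.card ι : ℝ) * U u P := by
    calc ∑ i, U u (Function.update P i (p i))
        = ∑ i : ι, ((cluster cls i).card : ℝ)⁻¹
            * ∑ j ∈ cluster cls i, U u (Function.update P j (p j)) :=
          (sum_cluster_avg cls fun j => U u (Function.update P j (p j))).symm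
      _ = ∑ _i : ι, U u P := Finset.sum_congr rfl fun i _ => (hclaim i).symm
      _ = (Fintype.card ι : ℝ) * U u P := by
          rw [Finset.sum_const, nsmul_eq_mul, Finset.card_univ]
  unfold Vfun
  rw [hVs, ← mul_assoc, inv_mul_cancel₀ (Nat.cast_ne_zero.2 Fintype.card_ne_zero), one_mul]

lemma D_nonneg {Y : ι → Finset A} {u : (ι → A) → ℝ} {cls : ι → κ}
    (hpi : PermInvariant Y u cls) {p b : ι → A → ℝ} (hp : p ∈ Delta Y)
    (hb : b ∈ BR Y u 0 (centroid cls p)) :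
    0 ≤ ∑ y : ι → A, u y * ∑ i, centroid cls (b - p) i (y i)
        * ∏ k ∈ Finset.univ.erase i, centroid cls p k (y k) := by
  have hre : (∑ y : ι → A, u y * ∑ i, centroid cls (b - p) i (y i)
        * ∏ k ∈ Finset.univ.erase i, centroid cls p k (y k))
      = ∑ i, U u (Function.update (centroid cls p) i (centroid cls (b - p) i)) := by
    simp only [U_update_eq, Finset.mul_sum]
    rw [Finset.sum_comm]
    exact Finset.sum_congr rfl fun i _ => Finset.sum_congr rfl fun y _ => by ring
  rw [hre]
  refine Finset.sum_nonneg fun i _ => ?_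
  rw [centroid_sub, U_update_sub, Function.update_eq_self]
  exact sub_nonneg.2 (U_le_update_centroid hpi hp hb i)

end Lemmas

variable [Nonempty ι]

/-- Along any solution of the joint CT-ECFP inclusion `q̇ ∈ BR(q̄) − q`, the function
`v(t) = (1/n) ∑ᵢ U(q^c_i(t), q̄^c_{-i}(t))` is nondecreasing. -/
theorem V_nondecreasing_along_solution
    (Y : ι → Finset A) (hY : ∀ i, (Y i).Nonempty) (u : (ι → A) → ℝ)
    (cls : ι → κ) (hpi : PermInvariant Y u cls)
    (x : ℝ → ι → A → ℝ) (hx : IsSolution Y (Fjoint Y u cls) x) :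
    ∀ s t : ℝ, 0 ≤ s → s ≤ t → Vfun u cls (x s) ≤ Vfun u cls (x t) := by
  classical
  obtain ⟨hmem, g, hgloc, hgae, hrepr⟩ := hx
  have hgIoc : ∀ {s t : ℝ}, 0 ≤ s → IntegrableOn g (Set.Ioc s t) volume :=
    fun {s t} hs => ECFPPrim.locInt_Ioc hgloc hs
  have hxdiff : ∀ s t : ℝ, 0 ≤ s → s ≤ t → x t - x s = ∫ r in Set.Ioc s t, g r := by
    intro s t hs hst
    rw [hrepr t (hs.trans hst), hrepr s hs,
      show Set.Ioc (0:ℝ) t = Set.Ioc 0 s ∪ Set.Ioc s t from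
        (Set.Ioc_union_Ioc_eq_Ioc hs hst).symm,
      MeasureTheory.setIntegral_union (Set.Ioc_disjoint_Ioc_of_le le_rfl) measurableSet_Ioc
        (hgIoc le_rfl) (hgIoc hs)]
    abel
  have hbase : ∀ (j : ι) (a : A),
      ECFPPrim.IsPrim (fun t => centroid cls (x t) j a)
        (fun t => centroid cls (g t) j a) := by
    intro j a
    set L : (ι → A → ℝ) →L[ℝ] ℝ :=
      ((cluster cls j).card : ℝ)⁻¹ • ∑ k ∈ cluster cls j,
        (ContinuousLinearMap.proj (R := ℝ) (φ := fun _ : A => ℝ) a).comp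
          (ContinuousLinearMap.proj (R := ℝ) (φ := fun _ : ι => A → ℝ) k) with hLdef
    have hL : ∀ q : ι → A → ℝ, centroid cls q j a = L q := by
      intro q
      rw [centroid_apply, hLdef]
      simp [ContinuousLinearMap.sum_apply, Finset.mul_sum]
    simp only [hL]
    refine ECFPPrim.isPrim_of_eq ?_ ?_
    · intro r hr
      obtain ⟨v, hv, hvi⟩ := hgloc r hr
      exact ⟨v, hv, L.integrable_comp hvi⟩
    · intro s t hs hst
      calc L (x t) - L (x s) = L (x t - x s) := (map_sub L _ _).symm
        _ = L (∫ r in Set.Ioc s t, g r) := by rw [hxdiff s t hs hst]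
        _ = ∫ r in Set.Ioc s t, L (g r) :=
            (ContinuousLinearMap.integral_comp_comm L (hgIoc hs)).symm
  have hPrim : ECFPPrim.IsPrim (fun t => U u (centroid cls (x t)))
      (fun t => ∑ y : ι → A, u y * ∑ i, centroid cls (g t) i (y i)
        * ∏ k ∈ Finset.univ.erase i, centroid cls (x t) k (y k)) := by
    have h1 : ∀ y : ι → A, ECFPPrim.IsPrim
        (fun t => ∏ i, centroid cls (x t) i (y i))
        (fun t => ∑ i, centroid cls (g t) i (y i)
          * ∏ k ∈ Finset.univ.erase i, centroid cls (x t) k (y k)) :=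
      fun y => ECFPPrim.IsPrim.prod (fun i _ => hbase i (y i))
    exact ECFPPrim.IsPrim.sum (fun y _ => (h1 y).const_mul (u y))
  intro s t hs hst
  have hxs : x s ∈ Delta Y := hmem s hs
  have hxt : x t ∈ Delta Y := hmem t (hs.trans hst)
  rw [Vfun_eq_U_centroid hpi hxs, Vfun_eq_U_centroid hpi hxt]
  have hkey := hPrim.eq s t hs hst
  have hae' : ∀ᵐ r ∂(volume.restrict (Set.Ioc s t)), g r ∈ Fjoint Y u cls (x r) :=
    MeasureTheory.ae_restrict_of_ae_restrict_of_subset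
      (fun r hr => hs.trans (le_of_lt hr.1)) hgae
  have hint0 : 0 ≤ ∫ r in Set.Ioc s t, ∑ y : ι → A,
      u y * ∑ i, centroid cls (g r) i (y i)
        * ∏ k ∈ Finset.univ.erase i, centroid cls (x r) k (y k) := by
    refine MeasureTheory.integral_nonneg_of_ae ?_
    filter_upwards [hae', MeasureTheory.ae_restrict_mem measurableSet_Ioc] with r hr hrmem
    obtain ⟨b, hbBR, hbeq⟩ := hr
    have hxr : x r ∈ Delta Y := hmem r (hs.trans (le_of_lt hrmem.1))
    have hbeq' : b - x r = g r := hbeq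
    show (0:ℝ) ≤ _
    rw [← hbeq']
    exact D_nonneg hpi hxr hbBR
  linarith [hkey, hint0]

end ECFP
end
end

section
/- Let C be a permutation-invariant partition of the player set of a finite normal-form game with identical interests. The ω-limit set of every solution of the centroid CT-ECFP differential inclusion ẏ ∈ BR(y) − y (taking values in the set of centroid, i.e. class-constant, distributions) is a connected subset of SNE along which U is constant. -/
open MeasureTheory Filter Topology

noncomputable section

namespace ECFP

variable {ι A κ : Type*}

variable [Fintype ι] [DecidableEq ι] [Fintype A] [DecidableEq κ]

variable [Nonempty ι]

/-! ### Auxiliary lemmas -/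

lemma simplex_coord_le_one {Y : Finset A} {p : A → ℝ} (hp : p ∈ simplex Y) (a : A) :
    p a ≤ 1 := by
  by_cases ha : a ∈ Y
  · calc p a ≤ ∑ b ∈ Y, p b := Finset.single_le_sum (fun b _ => hp.1 b) ha
      _ = 1 := hp.2.2
  · simp [hp.2.1 a ha]

lemma isClosed_simplex (Y : Finset A) : IsClosed (simplex Y) := by
  have h1 : IsClosed {p : A → ℝ | ∀ a, 0 ≤ p a} := by
    rw [Set.setOf_forall]
    exact isClosed_iInter fun a => isClosed_le continuous_const (continuous_apply a)
  have h2 : IsClosed {p : A → ℝ | ∀ a, a ∉ Y → p a = 0} := by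
    rw [Set.setOf_forall]
    refine isClosed_iInter fun a => ?_
    by_cases ha : a ∈ Y
    · simp [ha]
    · simpa [ha] using isClosed_eq (continuous_apply a) continuous_const
  have h3 : IsClosed {p : A → ℝ | ∑ a ∈ Y, p a = 1} :=
    isClosed_eq (continuous_finset_sum _ fun a _ => continuous_apply a) continuous_const
  exact h1.inter (h2.inter h3)

lemma isClosed_Delta (Y : ι → Finset A) : IsClosed (Delta Y) := by
  have : Delta Y = ⋂ i, (fun p : ι → A → ℝ => p i) ⁻¹' simplex (Y i) := by
    ext p; simp [Delta, Set.mem_iInter]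
  rw [this]
  exact isClosed_iInter fun i => (isClosed_simplex (Y i)).preimage (continuous_apply i)

lemma coord_abs_le_norm (v : ι → A → ℝ) (i : ι) (a : A) : |v i a| ≤ ‖v‖ :=
  le_trans (by simpa [Real.norm_eq_abs] using norm_le_pi_norm (v i) a) (norm_le_pi_norm v i)

lemma norm_le_of_coord {v : ι → A → ℝ} {c : ℝ} (hc : 0 ≤ c) (h : ∀ i a, |v i a| ≤ c) :
    ‖v‖ ≤ c := by
  refine (pi_norm_le_iff_of_nonneg hc).mpr fun i => ?_
  refine (pi_norm_le_iff_of_nonneg hc).mpr fun a => ?_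
  simpa [Real.norm_eq_abs] using h i a

lemma isCompact_Delta (Y : ι → Finset A) : IsCompact (Delta Y) := by
  have hb : Delta Y ⊆ Metric.closedBall 0 1 := by
    intro p hp
    rw [Metric.mem_closedBall, dist_zero_right]
    exact norm_le_of_coord zero_le_one fun i a =>
      abs_le.mpr ⟨by linarith [(hp i).1 a], simplex_coord_le_one (hp i) a⟩
  exact (isCompact_closedBall 0 1).of_isClosed_subset (isClosed_Delta Y) hb

lemma abs_prod_sub_prod_le {β : Type*} [DecidableEq β] (s : Finset β) (f h : β → ℝ)
    (hf : ∀ b ∈ s, |f b| ≤ 1) (hh : ∀ b ∈ s, |h b| ≤ 1) :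
    |∏ b ∈ s, f b - ∏ b ∈ s, h b| ≤ ∑ b ∈ s, |f b - h b| := by
  induction s using Finset.induction_on with
  | empty => simp
  | @insert a s ha ih =>
    rw [Finset.prod_insert ha, Finset.prod_insert ha, Finset.sum_insert ha]
    have h1 : |∏ b ∈ s, f b| ≤ 1 := by
      rw [Finset.abs_prod]
      exact Finset.prod_le_one (fun b _ => abs_nonneg _)
        (fun b hb => hf b (Finset.mem_insert_of_mem hb))
    have h2 : |h a| ≤ 1 := hh a (Finset.mem_insert_self a s)
    have ih' := ih (fun b hb => hf b (Finset.mem_insert_of_mem hb))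
      (fun b hb => hh b (Finset.mem_insert_of_mem hb))
    calc |f a * ∏ b ∈ s, f b - h a * ∏ b ∈ s, h b|
        = |(f a - h a) * ∏ b ∈ s, f b + h a * (∏ b ∈ s, f b - ∏ b ∈ s, h b)| := by ring_nf
      _ ≤ |(f a - h a) * ∏ b ∈ s, f b| + |h a * (∏ b ∈ s, f b - ∏ b ∈ s, h b)| := abs_add_le _ _
      _ ≤ |f a - h a| * 1 + 1 * |∏ b ∈ s, f b - ∏ b ∈ s, h b| := by
          rw [abs_mul, abs_mul]
          have e1 : |f a - h a| * |∏ b ∈ s, f b| ≤ |f a - h a| * 1 :=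
            mul_le_mul_of_nonneg_left h1 (abs_nonneg _)
          have e2 : |h a| * |∏ b ∈ s, f b - ∏ b ∈ s, h b| ≤
              1 * |∏ b ∈ s, f b - ∏ b ∈ s, h b| :=
            mul_le_mul_of_nonneg_right h2 (abs_nonneg _)
          linarith
      _ ≤ |f a - h a| + ∑ b ∈ s, |f b - h b| := by
          rw [mul_one, one_mul]; gcongr

/-- The function `v ↦ U(update p i v)`, written explicitly. -/
def Ulin (u : (ι → A) → ℝ) (p : ι → A → ℝ) (i : ι) (v : A → ℝ) : ℝ :=
  ∑ y : ι → A, u y * (v (y i) * ∏ j ∈ Finset.univ.erase i, p j (y j))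

lemma U_update_eq_s14 (u : (ι → A) → ℝ) (p : ι → A → ℝ) (i : ι) (v : A → ℝ) :
    U u (Function.update p i v) = Ulin u p i v := by
  unfold U Ulin
  refine Finset.sum_congr rfl fun y _ => ?_
  have h1 : ∏ j, Function.update p i v j (y j)
      = Function.update p i v i (y i) * ∏ j ∈ Finset.univ.erase i,
          Function.update p i v j (y j) :=
    (Finset.mul_prod_erase _ _ (Finset.mem_univ i)).symm
  rw [h1, Function.update_self]
  congr 2
  exact Finset.prod_congr rfl fun j hj => by
    rw [Function.update_of_ne (Finset.ne_of_mem_erase hj)]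

lemma Ulin_sub (u : (ι → A) → ℝ) (p : ι → A → ℝ) (i : ι) (v w : A → ℝ) :
    Ulin u p i (v - w) = Ulin u p i v - Ulin u p i w := by
  unfold Ulin
  rw [← Finset.sum_sub_distrib]
  exact Finset.sum_congr rfl fun y _ => by simp [Pi.sub_apply]; ring

/-- `Ulin` as a continuous linear map in the full joint-strategy variable. -/
def UlinCLM (u : (ι → A) → ℝ) (p : ι → A → ℝ) (i : ι) : (ι → A → ℝ) →L[ℝ] ℝ :=
  ∑ y : ι → A, (u y * ∏ j ∈ Finset.univ.erase i, p j (y j)) •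
    ((ContinuousLinearMap.proj (y i)).comp
      (ContinuousLinearMap.proj (R := ℝ) (φ := fun _ : ι => A → ℝ) i))

lemma UlinCLM_apply (u : (ι → A) → ℝ) (p : ι → A → ℝ) (i : ι) (v : ι → A → ℝ) :
    UlinCLM u p i v = Ulin u p i (v i) := by
  unfold UlinCLM Ulin
  rw [ContinuousLinearMap.sum_apply]
  exact Finset.sum_congr rfl fun y _ => by
    simp [ContinuousLinearMap.proj_apply]; ring

lemma Ulin_abs_le (u : (ι → A) → ℝ) {p : ι → A → ℝ} {v : A → ℝ}
    (hp : ∀ j a, |p j a| ≤ 1) (hv : ∀ a, |v a| ≤ 1) (i : ι) :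
    |Ulin u p i v| ≤ ∑ y : ι → A, |u y| := by
  refine (Finset.abs_sum_le_sum_abs _ _).trans (Finset.sum_le_sum fun y _ => ?_)
  rw [abs_mul, abs_mul, Finset.abs_prod]
  have h1 : ∏ j ∈ Finset.univ.erase i, |p j (y j)| ≤ 1 :=
    Finset.prod_le_one (fun _ _ => abs_nonneg _) (fun j _ => hp j (y j))
  have h2 : (0:ℝ) ≤ ∏ j ∈ Finset.univ.erase i, |p j (y j)| :=
    Finset.prod_nonneg fun _ _ => abs_nonneg _
  have h3 := hv (y i)
  exact mul_le_of_le_one_right (abs_nonneg _) (mul_le_one₀ h3 h2 h1)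

lemma Ulin_diff_le (u : (ι → A) → ℝ) {p q : ι → A → ℝ} {v : A → ℝ} {ε : ℝ} (hε : 0 ≤ ε)
    (hp : ∀ j a, |p j a| ≤ 1) (hq : ∀ j a, |q j a| ≤ 1) (hv : ∀ a, |v a| ≤ 1)
    (hpq : ∀ j a, |p j a - q j a| ≤ ε) (i : ι) :
    |Ulin u p i v - Ulin u q i v| ≤ (∑ y : ι → A, |u y|) * ((Fintype.card ι : ℝ) * ε) := by
  unfold Ulin
  rw [← Finset.sum_sub_distrib, Finset.sum_mul]
  refine (Finset.abs_sum_le_sum_abs _ _).trans (Finset.sum_le_sum fun y _ => ?_)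
  have key : u y * (v (y i) * ∏ j ∈ Finset.univ.erase i, p j (y j)) -
      u y * (v (y i) * ∏ j ∈ Finset.univ.erase i, q j (y j))
      = u y * v (y i) * (∏ j ∈ Finset.univ.erase i, p j (y j) -
          ∏ j ∈ Finset.univ.erase i, q j (y j)) := by ring
  rw [key, abs_mul, abs_mul]
  have hprod : |∏ j ∈ Finset.univ.erase i, p j (y j) -
      ∏ j ∈ Finset.univ.erase i, q j (y j)| ≤ (Fintype.card ι : ℝ) * ε := by
    refine (abs_prod_sub_prod_le _ _ _ (fun j _ => hp j (y j)) (fun j _ => hq j (y j))).trans ?_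
    calc ∑ j ∈ Finset.univ.erase i, |p j (y j) - q j (y j)|
        ≤ ∑ _j ∈ Finset.univ.erase i, ε := Finset.sum_le_sum fun j _ => hpq j (y j)
      _ = ((Finset.univ.erase i).card : ℝ) * ε := by rw [Finset.sum_const, nsmul_eq_mul]
      _ ≤ (Fintype.card ι : ℝ) * ε := by
          gcongr
          exact_mod_cast Finset.card_le_card (Finset.erase_subset _ _) |>.trans
            (le_of_eq (Finset.card_univ))
  have h3 := hv (y i)
  have e1 : |u y| * |v (y i)| ≤ |u y| := mul_le_of_le_one_right (abs_nonneg _) h3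
  calc |u y| * |v (y i)| * |∏ j ∈ Finset.univ.erase i, p j (y j) -
        ∏ j ∈ Finset.univ.erase i, q j (y j)|
      ≤ |u y| * |∏ j ∈ Finset.univ.erase i, p j (y j) -
        ∏ j ∈ Finset.univ.erase i, q j (y j)| :=
        mul_le_mul_of_nonneg_right e1 (abs_nonneg _)
    _ ≤ |u y| * ((Fintype.card ι : ℝ) * ε) := mul_le_mul_of_nonneg_left hprod (abs_nonneg _)

lemma continuous_U (u : (ι → A) → ℝ) : Continuous (U u) :=
  continuous_finset_sum _ fun y _ => continuous_const.mul <|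
    continuous_finset_prod _ fun i _ => (continuous_apply (y i)).comp (continuous_apply i)

lemma U_abs_le (u : (ι → A) → ℝ) {p : ι → A → ℝ} (hp : ∀ j a, |p j a| ≤ 1) :
    |U u p| ≤ ∑ y : ι → A, |u y| := by
  refine (Finset.abs_sum_le_sum_abs _ _).trans (Finset.sum_le_sum fun y _ => ?_)
  rw [abs_mul, Finset.abs_prod]
  have h1 : ∏ j, |p j (y j)| ≤ 1 :=
    Finset.prod_le_one (fun _ _ => abs_nonneg _) (fun j _ => hp j (y j))
  exact mul_le_of_le_one_right (abs_nonneg _) h1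

/-- Nested intersections of nonempty compact preconnected sets are preconnected. -/
lemma isPreconnected_iInter_nested {X : Type*} [TopologicalSpace X] [T2Space X]
    {K : ℕ → Set X} (hdec : ∀ n, K (n + 1) ⊆ K n) (hcpt : ∀ n, IsCompact (K n))
    (hconn : ∀ n, IsPreconnected (K n)) (_hne : ∀ n, (K n).Nonempty) :
    IsPreconnected (⋂ n, K n) := by
  have hsub : ∀ n, (⋂ m, K m) ⊆ K n := fun n => Set.iInter_subset _ n
  rw [isPreconnected_closed_iff]
  intro t1 t2 h1 h2 hcover hne1 hne2
  by_contra hcon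
  set S := ⋂ n, K n with hS
  have hScpt : IsCompact S :=
    (hcpt 0).of_isClosed_subset (isClosed_iInter fun n => (hcpt n).isClosed) (hsub 0)
  have hA : IsCompact (S ∩ t1) := hScpt.inter_right h1
  have hB : IsCompact (S ∩ t2) := hScpt.inter_right h2
  have hAB : Disjoint (S ∩ t1) (S ∩ t2) := by
    rw [Set.disjoint_iff_inter_eq_empty]
    rw [Set.not_nonempty_iff_eq_empty] at hcon
    rw [show S ∩ t1 ∩ (S ∩ t2) = S ∩ (t1 ∩ t2) by ext z; simp; tauto, hcon]
  obtain ⟨Uo, Vo, hUo, hVo, hAU, hBV, hUV⟩ := SeparatedNhds.of_isCompact_isCompact hA hB hAB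
  have hCempty : (⋂ n, K n \ (Uo ∪ Vo)) = ∅ := by
    simp only [Set.diff_eq]
    rw [← Set.iInter_inter, ← Set.diff_eq, ← hS, Set.diff_eq_empty]
    intro z hz
    rcases hcover hz with hz1 | hz2
    · exact Set.mem_union_left _ (hAU ⟨hz, hz1⟩)
    · exact Set.mem_union_right _ (hBV ⟨hz, hz2⟩)
  have hex : ∃ n, K n \ (Uo ∪ Vo) = ∅ := by
    by_contra hall
    push_neg at hall
    have := IsCompact.nonempty_iInter_of_sequence_nonempty_isCompact_isClosed
      (fun n => K n \ (Uo ∪ Vo))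
      (fun n => Set.diff_subset_diff_left (hdec n))
      (fun n => hall n)
      ((hcpt 0).diff (hUo.union hVo))
      (fun n => (hcpt n).isClosed.sdiff (hUo.union hVo))
    rw [hCempty] at this
    exact Set.not_nonempty_empty this
  obtain ⟨n, hn⟩ := hex
  have hKn : K n ⊆ Uo ∪ Vo := by rwa [Set.diff_eq_empty] at hn
  obtain ⟨z1, hz1⟩ := hne1
  obtain ⟨z2, hz2⟩ := hne2
  have := hconn n Uo Vo hUo hVo hKn
    ⟨z1, hsub n hz1.1, hAU ⟨hz1.1, hz1.2⟩⟩ ⟨z2, hsub n hz2.1, hBV ⟨hz2.1, hz2.2⟩⟩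
  obtain ⟨z, _, hzU, hzV⟩ := this
  exact hUV.ne_of_mem hzU hzV rfl

/-- **Proposition 1(i).** The ω-limit set of every (class-constant-valued) solution of the
centroid CT-ECFP inclusion `ẏ ∈ BR(y) − y` is a connected subset of SNE along which `U`
is constant. -/
theorem omegaLimit_of_centroid_solution
    (Y : ι → Finset A) (hY : ∀ i, (Y i).Nonempty) (u : (ι → A) → ℝ)
    (cls : ι → κ) (hpi : PermInvariant Y u cls)
    (x : ℝ → ι → A → ℝ) (hx : IsSolution Y (Fcent Y u) x)
    (hcc : ∀ t : ℝ, 0 ≤ t → classConst cls (x t)) :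
    IsConnected (omegaLimitSet x) ∧ omegaLimitSet x ⊆ SNE Y u cls ∧
      ∀ p ∈ omegaLimitSet x, ∀ p' ∈ omegaLimitSet x, U u p = U u p' := by
  classical
  obtain ⟨hxD, g, hgli, hgmem, hxint⟩ := hx
  set KU : ℝ := ∑ y : ι → A, |u y| with hKUdef
  have hKU0 : (0:ℝ) ≤ KU := Finset.sum_nonneg fun y _ => abs_nonneg _
  set nn : ℕ := Fintype.card ι with hnn
  set Cb : ℝ := (nn : ℝ) * (KU * (nn : ℝ)) with hCb
  have hCb0 : (0:ℝ) ≤ Cb := by positivity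
  -- coordinates of the trajectory lie in [0,1]
  have hx01 : ∀ t : ℝ, 0 ≤ t → ∀ j a, |x t j a| ≤ 1 := by
    intro t ht j a
    have h1 := (hxD t ht j).1 a
    have h2 := simplex_coord_le_one (hxD t ht j) a
    rw [abs_le]; constructor <;> linarith
  -- integrability of g on subintervals
  have hg_int : ∀ s t : ℝ, 0 ≤ s → IntegrableOn g (Set.Ioc s t) volume := by
    intro s t hs
    refine (hgli.integrableOn_compact_subset ?_ isCompact_Icc).mono_set
      Set.Ioc_subset_Icc_self
    exact fun r hr => le_trans hs hr.1
  have hsubI : ∀ s t : ℝ, 0 ≤ s → Set.Ioc s t ⊆ Set.Ici (0:ℝ) :=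
    fun s t hs r hr => le_trans hs hr.1.le
  -- difference formula
  have hdiff : ∀ s t : ℝ, 0 ≤ s → s ≤ t → x t - x s = ∫ r in Set.Ioc s t, g r := by
    intro s t hs hst
    rw [hxint t (hs.trans hst), hxint s hs]
    have hu : Set.Ioc (0:ℝ) s ∪ Set.Ioc s t = Set.Ioc 0 t :=
      Set.Ioc_union_Ioc_eq_Ioc hs hst
    rw [← hu, MeasureTheory.setIntegral_union (Set.Ioc_disjoint_Ioc_of_le le_rfl) measurableSet_Ioc
      (hg_int 0 s le_rfl) (hg_int s t hs)]
    abel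
  -- the master a.e. event
  have hE : ∀ᵐ r ∂(volume.restrict (Set.Ici (0:ℝ))),
      (∀ i a, |g r i a| ≤ 1) ∧ (∀ i, 0 ≤ Ulin u (x r) i (g r i)) ∧
      (∀ i, ∀ qi ∈ simplex (Y i),
        U u (Function.update (x r) i qi) - U u (x r) ≤ Ulin u (x r) i (g r i)) := by
    filter_upwards [hgmem, ae_restrict_mem measurableSet_Ici] with r hgr hr
    obtain ⟨b, hbBR, hgb⟩ := hgr
    have hxr := hxD r hr
    have hgTi : ∀ i, g r i = b i - x r i := by
      intro i; rw [← hgb]; rfl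
    have hbBR' : ∀ i, b i ∈ simplex (Y i) ∧ ∀ qi ∈ simplex (Y i),
        U u (Function.update (x r) i (b i)) ≥ U u (Function.update (x r) i qi) - 0 := by
      intro i
      have h := hbBR i
      simpa [BRi, Set.mem_setOf_eq] using h
    have hkey : ∀ i, Ulin u (x r) i (g r i)
        = U u (Function.update (x r) i (b i)) - U u (x r) := by
      intro i
      rw [hgTi i, Ulin_sub, ← U_update_eq_s14, ← U_update_eq_s14, Function.update_eq_self]
    refine ⟨?_, ?_, ?_⟩
    · intro i a
      have hb1 := (hbBR' i).1
      have e1 := simplex_coord_le_one hb1 a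
      have e2 := hb1.1 a
      have e3 := simplex_coord_le_one (hxr i) a
      have e4 := (hxr i).1 a
      rw [hgTi i]
      simp only [Pi.sub_apply]
      rw [abs_le]; constructor <;> linarith
    · intro i
      rw [hkey i]
      have h := (hbBR' i).2 (x r i) (hxr i)
      rw [Function.update_eq_self] at h
      linarith
    · intro i qi hqi
      rw [hkey i]
      have h := (hbBR' i).2 qi hqi
      linarith
  -- Lipschitz bound
  have hlip : ∀ s t : ℝ, 0 ≤ s → s ≤ t → ‖x t - x s‖ ≤ t - s := by
    intro s t hs hst
    rw [hdiff s t hs hst]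
    have hb : ∀ᵐ r ∂(volume : Measure ℝ), r ∈ Set.Ioc s t → ‖g r‖ ≤ 1 := by
      have h1 : ∀ᵐ r ∂(volume : Measure ℝ), r ∈ Set.Ici (0:ℝ) →
          ((∀ i a, |g r i a| ≤ 1) ∧ (∀ i, 0 ≤ Ulin u (x r) i (g r i)) ∧
          (∀ i, ∀ qi ∈ simplex (Y i),
            U u (Function.update (x r) i qi) - U u (x r) ≤ Ulin u (x r) i (g r i))) :=
        (ae_restrict_iff' measurableSet_Ici).mp hE
      filter_upwards [h1] with r hr hrIoc
      exact norm_le_of_coord zero_le_one fun i a => (hr (hsubI s t hs hrIoc)).1 i a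
    have := norm_setIntegral_le_of_norm_le_const_ae' (μ := volume) (s := Set.Ioc s t)
      measure_Ioc_lt_top hb
    rwa [Real.volume_real_Ioc_of_le hst, one_mul] at this
  -- continuity on [0, ∞)
  have hxcont : ContinuousOn x (Set.Ici (0:ℝ)) := by
    intro s hs
    rw [Metric.continuousWithinAt_iff]
    intro ε hε
    refine ⟨ε, hε, fun {t} ht hts => ?_⟩
    have hd : dist (x t) (x s) ≤ |t - s| := by
      rcases le_total s t with h | h
      · rw [dist_eq_norm]
        exact (hlip s t hs h).trans (le_abs_self _)
      · rw [dist_comm, dist_eq_norm]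
        calc ‖x s - x t‖ ≤ s - t := hlip t s ht h
          _ ≤ |t - s| := by rw [abs_sub_comm]; exact le_abs_self _
    calc dist (x t) (x s) ≤ |t - s| := hd
      _ = dist t s := (Real.dist_eq t s).symm
      _ < ε := hts
  -- the drift function
  set D : ℝ → ℝ := fun r => ∑ i, Ulin u (x r) i (g r i) with hDdef
  -- integrability of each drift term
  have hf_int : ∀ (i : ι) (s t : ℝ), 0 ≤ s →
      Integrable (fun r => Ulin u (x r) i (g r i)) (volume.restrict (Set.Ioc s t)) := by
    intro i s t hs
    have hg_aesm : AEStronglyMeasurable g (volume.restrict (Set.Ioc s t)) :=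
      (hg_int s t hs).aestronglyMeasurable
    have hx_aesm : ∀ (j : ι) (a : A),
        AEStronglyMeasurable (fun r => x r j a) (volume.restrict (Set.Ioc s t)) := by
      intro j a
      have hc1 : Continuous (fun p : ι → A → ℝ => p j a) :=
        (continuous_apply a).comp (continuous_apply j)
      have hc : ContinuousOn (fun r => x r j a) (Set.Ioc s t) :=
        hc1.comp_continuousOn (hxcont.mono (hsubI s t hs))
      exact hc.aestronglyMeasurable measurableSet_Ioc
    have haesm : AEStronglyMeasurable (fun r => Ulin u (x r) i (g r i))
        (volume.restrict (Set.Ioc s t)) := by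
      simp only [Ulin]
      apply Finset.aestronglyMeasurable_fun_sum
      intro y _
      apply AEStronglyMeasurable.const_mul
      apply AEStronglyMeasurable.mul
      · exact ((continuous_apply (y i)).comp (continuous_apply i)).comp_aestronglyMeasurable
          hg_aesm
      · exact Finset.aestronglyMeasurable_fun_prod _ fun j _ => hx_aesm j (y j)
    have hbd : ∀ᵐ r ∂(volume.restrict (Set.Ioc s t)), ‖Ulin u (x r) i (g r i)‖ ≤ KU := by
      filter_upwards [ae_restrict_of_ae_restrict_of_subset (hsubI s t hs) hE,
        ae_restrict_mem measurableSet_Ioc] with r hEr hr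
      have := Ulin_abs_le u (fun j a => hx01 r (le_trans hs hr.1.le) j a)
        (fun a => hEr.1 i a) i
      simpa [Real.norm_eq_abs] using this
    exact Integrable.mono' (integrableOn_const measure_Ioc_lt_top.ne) haesm hbd
  have hD_int : ∀ s t : ℝ, 0 ≤ s →
      Integrable D (volume.restrict (Set.Ioc s t)) := by
    intro s t hs
    exact integrable_finset_sum _ fun i _ => hf_int i s t hs
  -- single-piece estimate
  have hpiece : ∀ s t : ℝ, 0 ≤ s → s ≤ t →
      U u (x s) + ((∫ r in Set.Ioc s t, D r) - Cb * (t - s) ^ 2) ≤ U u (x t) := by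
    intro s t hs hst
    have ht0 : (0:ℝ) ≤ t := hs.trans hst
    set e := Fintype.equivFin ι with he
    set Z : ℕ → ι → A → ℝ := fun k j => if (e j : ℕ) < k then x t j else x s j with hZ
    have hZ0 : Z 0 = x s := funext fun j => by simp [hZ]
    have hZn : Z nn = x t := funext fun j => by simp [hZ, show (e j : ℕ) < nn from (e j).isLt]
    have hZ01 : ∀ k j a, |Z k j a| ≤ 1 := by
      intro k j a
      by_cases h : (e j : ℕ) < k
      · simp only [hZ, if_pos h]; exact hx01 t ht0 j a
      · simp only [hZ, if_neg h]; exact hx01 s hs j a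
    have hstep : ∀ k : Fin nn,
        (∫ r in Set.Ioc s t, Ulin u (x r) (e.symm k) (g r (e.symm k)))
          - KU * ((nn:ℝ) * (t - s)) * (t - s)
          ≤ U u (Z ((k:ℕ) + 1)) - U u (Z (k:ℕ)) := by
      intro k
      set i := e.symm k with hi
      have hei : e i = k := by rw [hi, Equiv.apply_symm_apply]
      have hupd1 : Z ((k:ℕ) + 1) = Function.update (Z (k:ℕ)) i (x t i) := by
        funext j
        rcases eq_or_ne j i with rfl | hji
        · rw [Function.update_self]
          simp only [hZ, hei]
          rw [if_pos (Nat.lt_succ_self _)]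
        · rw [Function.update_of_ne hji]
          simp only [hZ]
          have hne : (e j : ℕ) ≠ (k : ℕ) := by
            intro h
            exact hji (by rw [← Equiv.symm_apply_apply e j, Fin.val_injective h, hi])
          by_cases h : (e j : ℕ) < (k:ℕ)
          · rw [if_pos (Nat.lt_succ_of_lt h), if_pos h]
          · rw [if_neg h, if_neg (by omega)]
      have hupd2 : Function.update (Z (k:ℕ)) i (x s i) = Z (k:ℕ) := by
        funext j
        rcases eq_or_ne j i with rfl | hji
        · rw [Function.update_self]
          simp only [hZ, hei]
          rw [if_neg (lt_irrefl _)]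
        · rw [Function.update_of_ne hji]
      have h1 : U u (Z ((k:ℕ)+1)) = Ulin u (Z (k:ℕ)) i (x t i) := by
        rw [hupd1, U_update_eq_s14]
      have h2 : U u (Z (k:ℕ)) = Ulin u (Z (k:ℕ)) i (x s i) := by
        conv_lhs => rw [← hupd2]
        rw [U_update_eq_s14]
      have h3 : U u (Z ((k:ℕ)+1)) - U u (Z (k:ℕ)) = UlinCLM u (Z (k:ℕ)) i (x t - x s) := by
        rw [h1, h2, ← Ulin_sub, UlinCLM_apply]
        rfl
      have hIg := hg_int s t hs
      have h4 : UlinCLM u (Z (k:ℕ)) i (x t - x s)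
          = ∫ r in Set.Ioc s t, Ulin u (Z (k:ℕ)) i (g r i) := by
        rw [hdiff s t hs hst, ← ContinuousLinearMap.integral_comp_comm _ hIg]
        simp only [UlinCLM_apply]
      have hZint : Integrable (fun r => Ulin u (Z (k:ℕ)) i (g r i))
          (volume.restrict (Set.Ioc s t)) := by
        refine ((UlinCLM u (Z (k:ℕ)) i).integrable_comp hIg).congr ?_
        exact Eventually.of_forall fun r => UlinCLM_apply u (Z (k:ℕ)) i (g r)
      have hcint : Integrable (fun _ : ℝ => KU * ((nn:ℝ) * (t - s)))
          (volume.restrict (Set.Ioc s t)) :=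
        integrableOn_const measure_Ioc_lt_top.ne
      have h5 : (∫ r in Set.Ioc s t,
            (Ulin u (x r) i (g r i) - KU * ((nn:ℝ) * (t - s))))
          ≤ ∫ r in Set.Ioc s t, Ulin u (Z (k:ℕ)) i (g r i) := by
        refine integral_mono_ae ((hf_int i s t hs).sub hcint) hZint ?_
        filter_upwards [ae_restrict_of_ae_restrict_of_subset (hsubI s t hs) hE,
          ae_restrict_mem measurableSet_Ioc] with r hEr hr
        have hr0 : (0:ℝ) ≤ r := le_trans hs hr.1.le
        have hZx : ∀ j a, |Z (k:ℕ) j a - x r j a| ≤ t - s := by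
          intro j a
          by_cases h : (e j : ℕ) < (k:ℕ)
          · simp only [hZ, if_pos h]
            have h1 : |(x t - x r) j a| ≤ ‖x t - x r‖ := coord_abs_le_norm _ j a
            have h2 : ‖x t - x r‖ ≤ t - r := hlip r t hr0 hr.2
            have h3 : |(x t - x r) j a| = |x t j a - x r j a| := by
              simp [Pi.sub_apply]
            rw [h3] at h1
            have := hr.1
            linarith
          · simp only [hZ, if_neg h]
            have h1 : |(x s - x r) j a| ≤ ‖x s - x r‖ := coord_abs_le_norm _ j a
            have h2 : ‖x r - x s‖ ≤ r - s := hlip s r hs hr.1.le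
            have h3 : ‖x s - x r‖ = ‖x r - x s‖ := by rw [norm_sub_rev]
            have h4 : |(x s - x r) j a| = |x s j a - x r j a| := by
              simp [Pi.sub_apply]
            rw [h4, h3] at h1
            have := hr.2
            linarith
        have hd := Ulin_diff_le u (by linarith : (0:ℝ) ≤ t - s)
          (fun j a => hZ01 (k:ℕ) j a) (fun j a => hx01 r hr0 j a)
          (fun a => hEr.1 i a) hZx i
        rw [abs_sub_le_iff, ← hKUdef] at hd
        linarith [hd.1, hd.2]
      have h6 : (∫ r in Set.Ioc s t,
            (Ulin u (x r) i (g r i) - KU * ((nn:ℝ) * (t - s))))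
          = (∫ r in Set.Ioc s t, Ulin u (x r) i (g r i))
            - KU * ((nn:ℝ) * (t - s)) * (t - s) := by
        rw [integral_sub (hf_int i s t hs) hcint, setIntegral_const,
          Real.volume_real_Ioc_of_le hst, smul_eq_mul]
        ring
      rw [h3, h4]
      rw [h6] at h5
      linarith
    -- telescoping sum
    have htel : U u (x t) - U u (x s)
        = ∑ k ∈ Finset.range nn, (U u (Z (k+1)) - U u (Z k)) := by
      rw [Finset.sum_range_sub (fun k => U u (Z k)), hZn, hZ0]
    have hsum1 : ∑ k ∈ Finset.range nn, (U u (Z (k+1)) - U u (Z k))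
        = ∑ k : Fin nn, (U u (Z ((k:ℕ)+1)) - U u (Z (k:ℕ))) :=
      (Fin.sum_univ_eq_sum_range (fun k => U u (Z (k+1)) - U u (Z k)) nn).symm
    have hsum2 := Finset.sum_le_sum (fun k (_ : k ∈ Finset.univ) => hstep k)
    have hsum3 : ∑ k : Fin nn, ((∫ r in Set.Ioc s t,
          Ulin u (x r) (e.symm k) (g r (e.symm k)))
          - KU * ((nn:ℝ) * (t - s)) * (t - s))
        = (∫ r in Set.Ioc s t, D r) - (nn:ℝ) * (KU * ((nn:ℝ) * (t - s)) * (t - s)) := by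
      rw [Finset.sum_sub_distrib, Finset.sum_const, Finset.card_univ, Fintype.card_fin,
        nsmul_eq_mul]
      congr 1
      rw [Equiv.sum_comp e.symm
        (fun i => ∫ r in Set.Ioc s t, Ulin u (x r) i (g r i))]
      rw [← integral_finset_sum _ (fun i _ => hf_int i s t hs)]
    have hfinal : (∫ r in Set.Ioc s t, D r)
        - (nn:ℝ) * (KU * ((nn:ℝ) * (t - s)) * (t - s)) ≤ U u (x t) - U u (x s) := by
      rw [htel, hsum1, ← hsum3]
      exact hsum2
    have hCbeq : (nn:ℝ) * (KU * ((nn:ℝ) * (t - s)) * (t - s)) = Cb * (t - s) ^ 2 := by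
      rw [hCb]; ring
    rw [hCbeq] at hfinal
    linarith
  -- refined estimate: no error term
  have hmain : ∀ s t : ℝ, 0 ≤ s → s ≤ t →
      U u (x s) + (∫ r in Set.Ioc s t, D r) ≤ U u (x t) := by
    intro s t hs hst
    rcases eq_or_lt_of_le hst with rfl | hlt
    · simp
    by_contra hcon
    push_neg at hcon
    set c := U u (x s) + (∫ r in Set.Ioc s t, D r) - U u (x t) with hc
    have hc0 : 0 < c := by rw [hc]; linarith
    obtain ⟨m, hm⟩ := exists_nat_gt (Cb * (t - s)^2 / c)
    have hm0 : 0 < m := by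
      have h1 : (0:ℝ) ≤ Cb * (t-s)^2 / c := by positivity
      have : (0:ℝ) < m := lt_of_le_of_lt h1 hm
      exact_mod_cast this
    have hm0' : (0:ℝ) < m := by exact_mod_cast hm0
    set sj : ℕ → ℝ := fun j => s + (t - s) * j / m with hsj
    have hsj0 : sj 0 = s := by simp [hsj]
    have hsjm : sj m = t := by
      rw [hsj]; field_simp; ring
    have hsjmono : ∀ j1 j2 : ℕ, j1 ≤ j2 → sj j1 ≤ sj j2 := by
      intro j1 j2 h
      rw [hsj]
      simp only
      have h3 : (j1:ℝ) ≤ j2 := by exact_mod_cast h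
      have h2 : (0:ℝ) ≤ t - s := by linarith
      gcongr
    have hsjnn : ∀ j, 0 ≤ sj j := by
      intro j
      rw [hsj]
      simp only
      have : (0:ℝ) ≤ (t - s) * j / m :=
        div_nonneg (mul_nonneg (by linarith) (Nat.cast_nonneg j)) hm0'.le
      linarith
    have hsucc : ∀ j : ℕ, sj (j+1) - sj j = (t - s)/m := by
      intro j
      rw [hsj]
      simp only
      push_cast
      field_simp
      ring
    have hj : ∀ j : ℕ, U u (x (sj j)) + ((∫ r in Set.Ioc (sj j) (sj (j+1)), D r)
        - Cb * ((t-s)/m)^2) ≤ U u (x (sj (j+1))) := by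
      intro j
      have h := hpiece (sj j) (sj (j+1)) (hsjnn j) (hsjmono j (j+1) (Nat.le_succ j))
      rwa [show sj (j+1) - sj j = (t-s)/m from hsucc j] at h
    have hint_sum : ∀ J : ℕ, ∑ j ∈ Finset.range J,
        (∫ r in Set.Ioc (sj j) (sj (j+1)), D r) = ∫ r in Set.Ioc s (sj J), D r := by
      intro J
      induction J with
      | zero => simp [hsj0]
      | succ J ih =>
        rw [Finset.sum_range_succ, ih]
        rw [← MeasureTheory.setIntegral_union (Set.Ioc_disjoint_Ioc_of_le le_rfl) measurableSet_Ioc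
          (hD_int s (sj J) hs) (hD_int (sj J) (sj (J+1)) (hsjnn J))]
        rw [Set.Ioc_union_Ioc_eq_Ioc (by rw [← hsj0]; exact hsjmono 0 J (Nat.zero_le J))
          (hsjmono J (J+1) (Nat.le_succ J))]
    have hteles : (∫ r in Set.Ioc s t, D r) - (m:ℝ) * (Cb * ((t-s)/m)^2)
        ≤ U u (x t) - U u (x s) := by
      have h1 := Finset.sum_le_sum (fun j (_ : j ∈ Finset.range m) => hj j)
      have h2 : ∑ j ∈ Finset.range m, (U u (x (sj (j+1))) - U u (x (sj j)))
          = U u (x t) - U u (x s) := by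
        rw [Finset.sum_range_sub (fun j => U u (x (sj j))), hsjm, hsj0]
      have h3 : ∑ j ∈ Finset.range m, ((∫ r in Set.Ioc (sj j) (sj (j+1)), D r)
          - Cb * ((t-s)/m)^2) = (∫ r in Set.Ioc s t, D r) - (m:ℝ) * (Cb * ((t-s)/m)^2) := by
        rw [Finset.sum_sub_distrib, Finset.sum_const, Finset.card_range, nsmul_eq_mul,
          hint_sum m, hsjm]
      calc (∫ r in Set.Ioc s t, D r) - (m:ℝ) * (Cb * ((t-s)/m)^2)
          = ∑ j ∈ Finset.range m, ((∫ r in Set.Ioc (sj j) (sj (j+1)), D r)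
            - Cb * ((t-s)/m)^2) := h3.symm
        _ ≤ ∑ j ∈ Finset.range m, (U u (x (sj (j+1))) - U u (x (sj j))) := by
            refine Finset.sum_le_sum fun j _ => ?_
            have := hj j
            linarith
        _ = U u (x t) - U u (x s) := h2
    have heq : (m:ℝ) * (Cb * ((t-s)/m)^2) = Cb * (t-s)^2 / m := by
      field_simp
    have hlt2 : Cb * (t-s)^2 / m < c := by
      rw [div_lt_iff₀ hm0']
      have := (div_lt_iff₀ hc0).mp hm
      linarith [this]
    rw [heq] at hteles
    rw [hc] at hlt2
    linarith
  -- monotonicity of U along the trajectory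
  have hD_nonneg : ∀ s t : ℝ, 0 ≤ s → (0:ℝ) ≤ ∫ r in Set.Ioc s t, D r := by
    intro s t hs
    refine integral_nonneg_of_ae ?_
    filter_upwards [ae_restrict_of_ae_restrict_of_subset (hsubI s t hs) hE] with r hEr
    exact Finset.sum_nonneg fun i _ => hEr.2.1 i
  have hmono : ∀ s t : ℝ, 0 ≤ s → s ≤ t → U u (x s) ≤ U u (x t) := by
    intro s t hs hst
    have := hmain s t hs hst
    have := hD_nonneg s t hs
    linarith
  -- the nested closure sets
  set Kn : ℕ → Set (ι → A → ℝ) := fun m => closure (x '' Set.Ici (m : ℝ)) with hKn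
  have hKn_sub : ∀ m, Kn m ⊆ Delta Y := by
    intro m
    rw [hKn]
    apply closure_minimal ?_ (isClosed_Delta Y)
    rintro _ ⟨r, hr, rfl⟩
    exact hxD r (le_trans (Nat.cast_nonneg m) hr)
  have hKn_cpt : ∀ m, IsCompact (Kn m) := fun m =>
    (isCompact_Delta Y).of_isClosed_subset isClosed_closure (hKn_sub m)
  have hKn_conn : ∀ m, IsPreconnected (Kn m) := by
    intro m
    apply IsPreconnected.closure
    exact (isPreconnected_Ici).image x
      (hxcont.mono (fun r hr => Set.mem_Ici.mpr (le_trans (Nat.cast_nonneg m) (Set.mem_Ici.mp hr))))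
  have hKn_ne : ∀ m, (Kn m).Nonempty := fun m =>
    ⟨x (m:ℝ), subset_closure (Set.mem_image_of_mem x Set.self_mem_Ici)⟩
  have hKn_dec : ∀ m, Kn (m+1) ⊆ Kn m := fun m =>
    closure_mono (Set.image_mono (Set.Ici_subset_Ici.mpr (by exact_mod_cast Nat.le_succ m)))
  have homega : omegaLimitSet x = ⋂ m, Kn m := by
    ext p
    constructor
    · rintro ⟨tk, htk, hxtk⟩
      refine Set.mem_iInter.mpr fun m => ?_
      refine mem_closure_of_tendsto hxtk ?_
      filter_upwards [htk.eventually_ge_atTop (m:ℝ)] with k hk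
      exact ⟨tk k, hk, rfl⟩
    · intro hp
      rw [Set.mem_iInter] at hp
      have hch : ∀ m : ℕ, ∃ r : ℝ, r ∈ Set.Ici (m:ℝ) ∧ dist (x r) p < 1/(m+1) := by
        intro m
        have h := hp m
        rw [hKn] at h
        simp only at h
        rw [Metric.mem_closure_iff] at h
        obtain ⟨z, hz, hdz⟩ := h (1/(m+1)) (by positivity)
        obtain ⟨r, hr, rfl⟩ := hz
        exact ⟨r, hr, by rwa [dist_comm]⟩
      choose tk htk1 htk2 using hch
      refine ⟨tk, ?_, ?_⟩
      · refine tendsto_atTop_mono (fun m => htk1 m) tendsto_natCast_atTop_atTop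
      · rw [tendsto_iff_dist_tendsto_zero]
        refine squeeze_zero (fun m => dist_nonneg) (fun m => (htk2 m).le) ?_
        exact tendsto_one_div_add_atTop_nhds_zero_nat
  have hω_ne : (omegaLimitSet x).Nonempty := by
    obtain ⟨p, hpD, φ, hφ, hconv⟩ := (isCompact_Delta Y).tendsto_subseq
      (fun k : ℕ => hxD (k:ℝ) (Nat.cast_nonneg k))
    refine ⟨p, fun k => ((φ k : ℕ) : ℝ), ?_, hconv⟩
    refine tendsto_atTop_mono (fun k => ?_) tendsto_natCast_atTop_atTop
    exact_mod_cast hφ.le_apply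
  -- U is bounded above along the trajectory by its value at any ω-limit point
  have hub : ∀ q ∈ omegaLimitSet x, ∀ t : ℝ, 0 ≤ t → U u (x t) ≤ U u q := by
    rintro q ⟨tk, htk, hxtk⟩ t ht
    have hUq : Tendsto (fun k => U u (x (tk k))) atTop (𝓝 (U u q)) :=
      ((continuous_U u).tendsto q).comp hxtk
    refine ge_of_tendsto hUq ?_
    filter_upwards [htk.eventually_ge_atTop t] with k hk
    exact hmono t (tk k) ht hk
  -- constancy of U on the ω-limit set
  have hconst : ∀ p ∈ omegaLimitSet x, ∀ p' ∈ omegaLimitSet x, U u p = U u p' := by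
    have h1 : ∀ q ∈ omegaLimitSet x, ∀ q' ∈ omegaLimitSet x, U u q ≤ U u q' := by
      rintro q ⟨tk, htk, hxtk⟩ q' hq'
      have hUq : Tendsto (fun k => U u (x (tk k))) atTop (𝓝 (U u q)) :=
        ((continuous_U u).tendsto q).comp hxtk
      refine le_of_tendsto hUq ?_
      filter_upwards [htk.eventually_ge_atTop 0] with k hk
      exact hub q' hq' (tk k) hk
    exact fun p hp p' hp' => le_antisymm (h1 p hp p' hp') (h1 p' hp' p hp)
  -- the ω-limit set consists of symmetric Nash equilibria
  have hSNE : omegaLimitSet x ⊆ SNE Y u cls := by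
    intro p hp
    obtain ⟨tk, htk, hxtk⟩ := hp
    have hpω : p ∈ omegaLimitSet x := ⟨tk, htk, hxtk⟩
    have hev0 : ∀ᶠ k in atTop, (0:ℝ) ≤ tk k := htk.eventually_ge_atTop 0
    have hpD : p ∈ Delta Y :=
      (isClosed_Delta Y).mem_of_tendsto hxtk (hev0.mono fun k hk => hxD _ hk)
    have hcls : classConst cls p := by
      intro i j hij
      have h1 : Tendsto (fun k => x (tk k) i) atTop (𝓝 (p i)) :=
        ((continuous_apply i).tendsto p).comp hxtk
      have h2 : Tendsto (fun k => x (tk k) j) atTop (𝓝 (p j)) :=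
        ((continuous_apply j).tendsto p).comp hxtk
      exact tendsto_nhds_unique
        (h1.congr' (hev0.mono fun k hk => hcc (tk k) hk i j hij)) h2
    refine ⟨⟨hpD, ?_⟩, hcls⟩
    intro i qi hqi
    by_contra hgt
    push_neg at hgt
    set δ := (U u (Function.update p i qi) - U u p)/2 with hδ
    have hδ0 : 0 < δ := by rw [hδ]; linarith
    set Φ : (ι → A → ℝ) → ℝ := fun z => U u (Function.update z i qi) - U u z with hΦ
    have hΦcont : Continuous Φ := by
      refine Continuous.sub ?_ (continuous_U u)
      refine (continuous_U u).comp ?_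
      refine continuous_pi fun j => ?_
      by_cases hj : j = i
      · subst hj
        simp only [Function.update_self]
        exact continuous_const
      · simp only [Function.update_of_ne hj]
        exact continuous_apply j
    have hΦp : Φ p = 2*δ := by rw [hΦ, hδ]; ring
    obtain ⟨ρ, hρ0, hρ⟩ := Metric.continuousAt_iff.mp hΦcont.continuousAt δ hδ0
    set τ := ρ/4 with hτ
    have hτ0 : 0 < τ := by positivity
    have hkey : ∀ T : ℝ, 0 ≤ T → dist (x T) p < ρ/2 →
        U u (x T) + δ * τ ≤ U u (x (T + τ)) := by
      intro T hT hTp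
      have h1 := hmain T (T + τ) hT (by linarith)
      have h2 : δ * τ ≤ ∫ r in Set.Ioc T (T + τ), D r := by
        have h3 : (∫ _r in Set.Ioc T (T+τ), δ) ≤ ∫ r in Set.Ioc T (T+τ), D r := by
          refine integral_mono_ae (integrableOn_const measure_Ioc_lt_top.ne)
            (hD_int T (T+τ) hT) ?_
          filter_upwards [ae_restrict_of_ae_restrict_of_subset (hsubI T (T+τ) hT) hE,
            ae_restrict_mem measurableSet_Ioc] with r hEr hr
          have hr0 : (0:ℝ) ≤ r := le_trans hT hr.1.le
          have hDge : Ulin u (x r) i (g r i) ≤ D r :=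
            Finset.single_le_sum (fun i' (_ : i' ∈ Finset.univ) => hEr.2.1 i')
              (Finset.mem_univ i)
          have h4 := hEr.2.2 i qi hqi
          have hdist : dist (x r) p < ρ := by
            have h5 : dist (x r) (x T) ≤ r - T := by
              rw [dist_eq_norm]; exact hlip T r hT hr.1.le
            have h6 : r - T ≤ τ := by linarith [hr.2]
            calc dist (x r) p ≤ dist (x r) (x T) + dist (x T) p := dist_triangle _ _ _
              _ < ρ := by rw [hτ] at h6; linarith
          have hΦz := hρ hdist
          rw [Real.dist_eq, hΦp] at hΦz
          rw [abs_lt] at hΦz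
          have h7 : δ ≤ Φ (x r) := by linarith [hΦz.1]
          rw [hΦ] at h7
          simp only at h7
          linarith
        rw [setIntegral_const, Real.volume_real_Ioc_of_le (by linarith),
          smul_eq_mul] at h3
        have h3' : (T + τ - T) * δ = δ * τ := by ring
        linarith
      linarith
    have hUtk : Tendsto (fun k => U u (x (tk k))) atTop (𝓝 (U u p)) :=
      ((continuous_U u).tendsto p).comp hxtk
    have hevd : ∀ᶠ k in atTop, dist (x (tk k)) p < ρ/2 :=
      (Metric.tendsto_nhds.mp hxtk) (ρ/2) (by positivity)
    have hevU : ∀ᶠ k in atTop, U u p - δ*τ < U u (x (tk k)) :=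
      hUtk.eventually (eventually_gt_nhds (by nlinarith))
    obtain ⟨k, hk0, hk1, hk2⟩ := (hev0.and (hevd.and hevU)).exists
    have h8 := hkey (tk k) hk0 hk1
    have h9 := hub p hpω (tk k + τ) (by linarith)
    linarith [hk2]
  -- conclusion
  refine ⟨⟨hω_ne, ?_⟩, hSNE, hconst⟩
  rw [homega]
  exact isPreconnected_iInter_nested hKn_dec hKn_cpt hKn_conn hKn_ne

end ECFP
end
end
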